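/- arXiv:1512.04142 — 5 statements merged into one kernel-verified Lean document; each statement's English description precedes it below -/
import Mathlib

section
/- Let a be a symmetric, primitive random walk on ℤ with characteristic function f(x) = ∑_{k∈ℤ} a(k) e^{ikx}. If a has an even step size (there exists an even integer n with a(n) ≠ 0), then for every real x with |f(x)| = 1 there exists k ∈ ℤ with x = 2πk. -/
open Filter Asymptotics

/-- A random walk on `ℤ`: nonnegative step probabilities summing to `1`,
with `limsup a(n)^(1/n) < 1` (taken over both tails). -/
def IsRandomWalk (a : ℤ → ℝ) : Prop :=
  (∀ n : ℤ, 0 ≤ a n) ∧ (∑' n : ℤ, a n) = 1 ∧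
    Filter.limsup (fun n : ℕ => (max (a (n : ℤ)) (a (-(n : ℤ)))) ^ (1 / (n : ℝ)))
      Filter.atTop < 1

/-- The `n`-th return probability of the random walk `a`: the value at `0` of the
`n`-fold convolution of `a` with itself. -/
noncomputable def returnProb (a : ℤ → ℝ) (n : ℕ) : ℝ :=
  ∑' k : Fin n → ℤ, if (∑ i, k i) = 0 then ∏ i, a (k i) else 0

/-- The characteristic function `f(x) = ∑_{k ∈ ℤ} a(k) e^{i k x}` of the walk `a`. -/
noncomputable def charFun (a : ℤ → ℝ) (x : ℝ) : ℂ :=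
  ∑' k : ℤ, (a k : ℂ) * Complex.exp (Complex.I * k * x)


lemma unit_re_one (w : ℂ) (h1 : ‖w‖ = 1) (h2 : w.re = 1) : w = 1 := by
  have hn : Complex.normSq w = 1 := by rw [← Complex.sq_norm, h1]; norm_num
  have him : w.im = 0 := by
    have := Complex.normSq_apply w
    nlinarith [this]
  exact Complex.ext (by simp [h2]) (by simp [him])

lemma exp_subgroup (S : Set ℤ) (hS : AddSubgroup.closure S = ⊤) (y : ℝ)
    (h : ∀ k ∈ S, Complex.exp (Complex.I * k * y) = 1) :
    ∃ m : ℤ, y = 2 * Real.pi * m := by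
  let H : AddSubgroup ℤ :=
  { carrier := {k : ℤ | Complex.exp (Complex.I * k * y) = 1}
    zero_mem' := by simp
    add_mem' := by
      intro p q hp hq
      simp only [Set.mem_setOf_eq] at *
      have e : Complex.I * ((p + q : ℤ) : ℂ) * y = Complex.I * p * y + Complex.I * q * y := by
        push_cast; ring
      rw [e, Complex.exp_add, hp, hq, one_mul]
    neg_mem' := by
      intro p hp
      simp only [Set.mem_setOf_eq] at *
      have e : Complex.I * ((-p : ℤ) : ℂ) * y = -(Complex.I * p * y) := by push_cast; ring
      rw [e, Complex.exp_neg, hp, inv_one] }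
  have hle : AddSubgroup.closure S ≤ H := (AddSubgroup.closure_le H).mpr h
  have h1 : (1 : ℤ) ∈ H := by
    have : (1 : ℤ) ∈ AddSubgroup.closure S := by rw [hS]; trivial
    exact hle this
  have h1' : Complex.exp (Complex.I * y) = 1 := by
    have : Complex.exp (Complex.I * ((1 : ℤ) : ℂ) * y) = 1 := h1
    simpa using this
  rw [Complex.exp_eq_one_iff] at h1'
  obtain ⟨n, hn⟩ := h1'
  refine ⟨n, ?_⟩
  have := congrArg Complex.im hn
  simp [Complex.mul_im] at this
  linarith [this]

/-- For a symmetric, primitive random walk having an even step size. -/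
theorem abs_charFun_eq_one_even_step (a : ℤ → ℝ) (ha : IsRandomWalk a)
    (hsym : ∀ n : ℤ, a n = a (-n))
    (hprim : AddSubgroup.closure {n : ℤ | a n ≠ 0} = ⊤)
    (heven : ∃ n : ℤ, Even n ∧ a n ≠ 0) :
    ∀ x : ℝ, ‖charFun a x‖ = 1 → ∃ k : ℤ, x = 2 * Real.pi * k := by
  intro x hx
  obtain ⟨ha0, ha1, -⟩ := ha
  have hsum : Summable a := by
    by_contra h
    rw [tsum_eq_zero_of_not_summable h] at ha1; norm_num at ha1
  have habs : ∀ k : ℤ, ‖Complex.exp (Complex.I * k * x)‖ = 1 := by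
    intro k
    rw [Complex.norm_exp]
    norm_num [Complex.mul_re, Complex.mul_im]
  set F : ℤ → ℂ := fun k => (a k : ℂ) * Complex.exp (Complex.I * k * x) with hF
  have hsumF : Summable F := by
    apply Summable.of_norm_bounded hsum
    intro k
    rw [hF]
    simp only [norm_mul, Complex.norm_real, Real.norm_eq_abs, habs k, mul_one]
    exact le_of_eq (abs_of_nonneg (ha0 k))
  set z : ℂ := charFun a x with hzdef
  have htsumF : ∑' k : ℤ, F k = z := rfl
  have hzz : (starRingEnd ℂ) z * z = 1 := by
    have h1 : Complex.normSq z = 1 := by rw [← Complex.sq_norm, hx]; norm_num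
    rw [mul_comm, Complex.mul_conj, h1, Complex.ofReal_one]
  -- the nonnegative terms
  set g : ℤ → ℝ := fun k => a k - ((starRingEnd ℂ) z * F k).re with hg
  have hGsum : Summable (fun k => (starRingEnd ℂ) z * F k) := hsumF.mul_left _
  have hGre : Summable (fun k => ((starRingEnd ℂ) z * F k).re) :=
    hGsum.map Complex.reCLM Complex.reCLM.continuous
  have hgsum : Summable g := hsum.sub hGre
  have hre_le : ∀ k : ℤ, ((starRingEnd ℂ) z * F k).re ≤ a k := by
    intro k
    calc ((starRingEnd ℂ) z * F k).re ≤ ‖(starRingEnd ℂ) z * F k‖ :=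
          Complex.re_le_norm _
      _ = a k := by
          rw [norm_mul, Complex.norm_conj, hx, one_mul, hF]
          simp only [norm_mul, Complex.norm_real, Real.norm_eq_abs, habs k, mul_one]
          exact abs_of_nonneg (ha0 k)
  have hg0 : ∀ k : ℤ, 0 ≤ g k := fun k => sub_nonneg.mpr (hre_le k)
  have hgtsum : ∑' k : ℤ, g k = 0 := by
    rw [hg]
    rw [Summable.tsum_sub hsum hGre, ha1, ← Complex.re_tsum hGsum, tsum_mul_left, htsumF, hzz]
    norm_num
  have hgzero : ∀ k : ℤ, g k = 0 := by
    intro k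
    refine le_antisymm ?_ (hg0 k)
    rw [← hgtsum]
    exact Summable.le_tsum hgsum k (fun j _ => hg0 j)
  -- key: phases align
  have key : ∀ k : ℤ, a k ≠ 0 → Complex.exp (Complex.I * k * x) = z := by
    intro k hk
    have hre : ((starRingEnd ℂ) z * F k).re = a k := by
      have := hgzero k; rw [hg] at this; simp only at this; linarith
    have habsw : ‖(starRingEnd ℂ) z * Complex.exp (Complex.I * k * x)‖ = 1 := by
      rw [norm_mul, Complex.norm_conj, hx, one_mul, habs k]
    have hrew : ((starRingEnd ℂ) z * Complex.exp (Complex.I * k * x)).re = 1 := by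
      have hFk : (starRingEnd ℂ) z * F k
          = (a k : ℂ) * ((starRingEnd ℂ) z * Complex.exp (Complex.I * k * x)) := by
        rw [hF]; ring
      rw [hFk, Complex.re_ofReal_mul] at hre
      exact mul_left_cancel₀ hk (hre.trans (mul_one (a k)).symm)
    have hw1 : (starRingEnd ℂ) z * Complex.exp (Complex.I * k * x) = 1 :=
      unit_re_one _ habsw hrew
    have := congrArg (fun w => z * w) hw1
    simp only [← mul_assoc] at this
    rw [mul_comm z ((starRingEnd ℂ) z), hzz, one_mul, mul_one] at this
    exact this
  -- z * z = 1 via symmetry on the even step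
  obtain ⟨n, hne, hn0⟩ := heven
  have hn0' : a (-n) ≠ 0 := by rw [← hsym]; exact hn0
  have hz2 : z * z = 1 := by
    have h1 := key n hn0
    have h2 := key (-n) hn0'
    nth_rewrite 1 [← h1]
    rw [← h2, ← Complex.exp_add]
    have e : Complex.I * (n : ℂ) * x + Complex.I * ((-n : ℤ) : ℂ) * x = 0 := by
      push_cast; ring
    rw [e, Complex.exp_zero]
  -- step 1: 2x is a multiple of 2π
  obtain ⟨m, hm⟩ := exp_subgroup {n : ℤ | a n ≠ 0} hprim (2 * x) (by
    intro k hk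
    have e : Complex.I * (k : ℂ) * ((2 * x : ℝ) : ℂ)
        = Complex.I * k * x + Complex.I * k * x := by push_cast; ring
    rw [e, Complex.exp_add, key k hk, hz2])
  have hx2 : x = Real.pi * m := by
    have : (2 : ℝ) * x = 2 * (Real.pi * m) := by rw [hm]; ring
    linarith
  -- step 2: even step forces z = 1
  obtain ⟨t, ht⟩ := hne
  have hz1 : z = 1 := by
    have h1 := key n hn0
    rw [← h1]
    have e : Complex.I * (n : ℂ) * (x : ℂ) = (t * m : ℤ) * (2 * Real.pi * Complex.I) := by
      rw [hx2]; push_cast [ht]; ring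
    rw [e, Complex.exp_int_mul_two_pi_mul_I]
  -- step 3: x is a multiple of 2π
  exact exp_subgroup {n : ℤ | a n ≠ 0} hprim x (by
    intro k hk
    rw [key k hk, hz1])
end

section
/- Let a be a symmetric random walk on ℤ with a(n) ≠ 0 for some n ≠ 0, and let f(x) = ∑_{k∈ℤ} a(k) e^{ikx} be its characteristic function. Then there exists a function h, complex analytic (holomorphic) on an open neighborhood of 0 in ℂ, such that f(x) = h(x²) for all x in a neighborhood of 0, h(0) = 1, and h'(0) < 0 (indeed h'(0) = -(1/2)∑_{k∈ℤ} k² a(k)). -/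
open Filter Asymptotics

lemma my_cosh_le_exp_abs (x : ℝ) : Real.cosh x ≤ Real.exp |x| := by
  rw [Real.cosh_eq]
  have h1 : Real.exp x ≤ Real.exp |x| := Real.exp_le_exp.2 (le_abs_self x)
  have h2 : Real.exp (-x) ≤ Real.exp |x| := Real.exp_le_exp.2 (neg_le_abs x)
  linarith

lemma my_decay {a : ℤ → ℝ} (hpos : ∀ n : ℤ, 0 ≤ a n) (ha1 : ∀ n : ℤ, a n ≤ 1)
    (hlim : Filter.limsup (fun n : ℕ => (max (a (n : ℤ)) (a (-(n : ℤ)))) ^ (1 / (n : ℝ)))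
      Filter.atTop < 1) :
    ∃ r : ℝ, 0 < r ∧ r < 1 ∧ ∃ N : ℕ, ∀ n : ℕ, N ≤ n → max (a n) (a (-n : ℤ)) ≤ r ^ n := by
  set u : ℕ → ℝ := fun n => (max (a (n : ℤ)) (a (-(n : ℤ)))) ^ (1 / (n : ℝ)) with hu
  have hub : ∀ n, u n ≤ 1 := by
    intro n
    apply Real.rpow_le_one (le_max_iff.2 (Or.inl (hpos _))) (max_le (ha1 _) (ha1 _))
    positivity
  obtain ⟨r₀, hr₀, hr₀1⟩ := exists_between hlim
  set r := max r₀ (1/2) with hrdef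
  have hr1 : r < 1 := max_lt hr₀1 (by norm_num)
  have hr0 : 0 < r := lt_of_lt_of_le (by norm_num) (le_max_right _ _)
  have hev : ∀ᶠ n in atTop, u n < r :=
    eventually_lt_of_limsup_lt (lt_of_lt_of_le hr₀ (le_max_left _ _))
      (isBoundedUnder_of ⟨1, fun n => hub n⟩)
  obtain ⟨N, hN⟩ := (hev.and (eventually_ge_atTop 1)).exists_forall_of_atTop
  refine ⟨r, hr0, hr1, N, fun n hn => ?_⟩
  obtain ⟨h1, h2⟩ := hN n hn
  have hnn : (0:ℝ) ≤ max (a (n : ℤ)) (a (-(n : ℤ))) := le_max_iff.2 (Or.inl (hpos _))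
  have hne : (n : ℝ) ≠ 0 := by positivity
  calc max (a (n:ℤ)) (a (-(n:ℤ)))
      = ((max (a (n:ℤ)) (a (-(n:ℤ)))) ^ (1/(n:ℝ))) ^ (n:ℕ) := by
        rw [← Real.rpow_natCast (_ ^ (1/(n:ℝ))) n, ← Real.rpow_mul hnn]
        rw [one_div, inv_mul_cancel₀ hne, Real.rpow_one]
    _ ≤ r ^ (n:ℕ) := by
        apply pow_le_pow_left₀ (Real.rpow_nonneg hnn _) (le_of_lt h1)

lemma my_expsum {a : ℤ → ℝ} (hpos : ∀ n : ℤ, 0 ≤ a n)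
    {r : ℝ} (hr0 : 0 < r) (hr1 : r < 1) {N : ℕ}
    (hN : ∀ n : ℕ, N ≤ n → max (a n) (a (-n : ℤ)) ≤ r ^ n) :
    ∃ t : ℝ, 0 < t ∧ Summable (fun k : ℤ => a k * Real.exp (t * |(k : ℝ)|)) := by
  set t := Real.log (1/r) / 2 with ht
  have hlog : 0 < Real.log (1/r) := Real.log_pos (by rw [lt_div_iff₀ hr0]; linarith)
  have ht0 : 0 < t := by positivity
  have hq : r * Real.exp t < 1 := by
    have : Real.exp t < Real.exp (Real.log (1/r)) := Real.exp_lt_exp.2 (by linarith)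
    rw [Real.exp_log (by positivity)] at this
    calc r * Real.exp t < r * (1/r) := by nlinarith [Real.exp_pos t]
      _ = 1 := by field_simp
  set q := r * Real.exp t with hqdef
  have hq0 : 0 ≤ q := le_of_lt (by positivity)
  have hgeom : Summable (fun n : ℕ => q ^ n) := summable_geometric_of_lt_one hq0 hq
  have key : ∀ (s : ℕ → ℝ), (∀ n, 0 ≤ s n) → (∀ n : ℕ, N ≤ n → s n ≤ r ^ n) →
      Summable (fun n : ℕ => s n * Real.exp (t * n)) := by
    intro s hs hsle
    apply summable_of_isBigO_nat hgeom
    apply IsBigO.of_bound 1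
    filter_upwards [eventually_ge_atTop N] with n hn
    rw [one_mul, Real.norm_eq_abs, Real.norm_eq_abs,
      abs_of_nonneg (mul_nonneg (hs n) (Real.exp_pos _).le), abs_of_nonneg (pow_nonneg hq0 n)]
    calc s n * Real.exp (t*n) ≤ r^n * Real.exp (t*n) := by
          apply mul_le_mul_of_nonneg_right (hsle n hn) (le_of_lt (Real.exp_pos _))
      _ = q ^ n := by
          rw [hqdef, mul_pow, ← Real.exp_nat_mul]; ring_nf
  refine ⟨t, ht0, Summable.of_nat_of_neg ?_ ?_⟩
  · have := key (fun n => a n) (fun n => hpos _) (fun n hn => le_trans (le_max_left _ _) (hN n hn))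
    apply this.congr
    intro n; simp
  · have := key (fun n => a (-n:ℤ)) (fun n => hpos _)
      (fun n hn => le_trans (le_max_right _ _) (hN n hn))
    apply this.congr
    intro n; simp

lemma my_momsum {a : ℤ → ℝ} (hpos : ∀ n : ℤ, 0 ≤ a n) {t : ℝ} (ht : 0 < t)
    (hM : Summable (fun k : ℤ => a k * Real.exp (t * |(k:ℝ)|))) (n : ℕ) :
    Summable (fun k : ℤ => a k * (k:ℝ)^(2*n)) ∧
    ∑' k : ℤ, a k * (k:ℝ)^(2*n) ≤
      (((2*n).factorial : ℝ) / t^(2*n)) * ∑' k : ℤ, a k * Real.exp (t * |(k:ℝ)|) := by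
  set C : ℝ := ((2*n).factorial : ℝ) / t^(2*n) with hC
  have hb : ∀ k : ℤ, a k * (k:ℝ)^(2*n) ≤ C * (a k * Real.exp (t * |(k:ℝ)|)) := by
    intro k
    have h2 : |(k:ℝ)|^(2*n) ≤ C * Real.exp (t * |(k:ℝ)|) := by
      rw [hC, div_mul_eq_mul_div, le_div_iff₀ (pow_pos ht _)]
      calc |(k:ℝ)|^(2*n) * t^(2*n) = (t * |(k:ℝ)|)^(2*n) := by rw [mul_pow]; ring
        _ ≤ ((2*n).factorial : ℝ) * Real.exp (t * |(k:ℝ)|) := by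
            have h3 := Real.pow_div_factorial_le_exp _
              (mul_nonneg ht.le (abs_nonneg (k:ℝ))) (2*n)
            rw [div_le_iff₀ (by positivity)] at h3
            linarith
    calc a k * (k:ℝ)^(2*n) = a k * |(k:ℝ)|^(2*n) := by
          rw [(even_two_mul n).pow_abs]
      _ ≤ a k * (C * Real.exp (t * |(k:ℝ)|)) :=
          mul_le_mul_of_nonneg_left h2 (hpos k)
      _ = C * (a k * Real.exp (t * |(k:ℝ)|)) := by ring
  have hnn : ∀ k : ℤ, 0 ≤ a k * (k:ℝ)^(2*n) :=
    fun k => mul_nonneg (hpos k) ((even_two_mul n).pow_nonneg _)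
  have hs : Summable (fun k : ℤ => a k * (k:ℝ)^(2*n)) :=
    Summable.of_nonneg_of_le hnn hb (hM.mul_left C)
  exact ⟨hs, le_trans (Summable.tsum_le_tsum hb hs (hM.mul_left C)) (le_of_eq tsum_mul_left)⟩

lemma my_fubini {a : ℤ → ℝ} (hpos : ∀ n : ℤ, 0 ≤ a n) {t : ℝ}
    (hM : Summable (fun k : ℤ => a k * Real.exp (t * |(k:ℝ)|))) {x : ℝ} (hx : |x| < t) :
    (∑' k : ℤ, a k * Real.cos (k * x)) =
    ∑' n : ℕ, ((-1)^n * (∑' k : ℤ, a k * (k:ℝ)^(2*n)) / ((2*n).factorial : ℝ)) * x^(2*n) := by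
  set f : ℤ → ℕ → ℝ :=
    fun k n => a k * ((-1)^n * ((k:ℝ) * x)^(2*n) / ((2*n).factorial : ℝ)) with hf
  have habs : Summable
      (fun p : ℤ × ℕ => a p.1 * (((p.1:ℝ) * x)^(2*p.2) / ((2*p.2).factorial : ℝ))) := by
    rw [summable_prod_of_nonneg]
    · constructor
      · intro k
        exact ((Real.hasSum_cosh ((k:ℝ)*x)).mul_left (a k)).summable
      · apply Summable.of_nonneg_of_le (fun k => ?_) (fun k => ?_) hM
        · exact tsum_nonneg fun n => mul_nonneg (hpos k)
            (div_nonneg ((even_two_mul n).pow_nonneg _) (Nat.cast_nonneg _))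
        · rw [((Real.hasSum_cosh ((k:ℝ)*x)).mul_left (a k)).tsum_eq]
          apply mul_le_mul_of_nonneg_left _ (hpos k)
          calc Real.cosh ((k:ℝ)*x) ≤ Real.exp |(k:ℝ)*x| := my_cosh_le_exp_abs _
            _ ≤ Real.exp (t * |(k:ℝ)|) := by
                apply Real.exp_le_exp.2
                rw [abs_mul]
                calc |(k:ℝ)| * |x| ≤ |(k:ℝ)| * t :=
                      mul_le_mul_of_nonneg_left hx.le (abs_nonneg _)
                  _ = t * |(k:ℝ)| := mul_comm _ _
    · intro p
      exact mul_nonneg (hpos p.1)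
        (div_nonneg ((even_two_mul p.2).pow_nonneg _) (Nat.cast_nonneg _))
  have hG : Summable (Function.uncurry f) := by
    apply Summable.of_abs
    apply habs.congr
    intro p
    rw [Function.uncurry, hf]
    rw [abs_mul, abs_of_nonneg (hpos p.1), abs_div, abs_mul, abs_pow, abs_neg, abs_one,
      one_pow, one_mul, abs_pow, Nat.abs_cast, (even_two_mul p.2).pow_abs]
  calc (∑' k : ℤ, a k * Real.cos (k * x)) = ∑' k, ∑' n, f k n := by
        apply tsum_congr; intro k
        rw [((Real.hasSum_cos ((k:ℝ)*x)).mul_left (a k)).tsum_eq]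
    _ = ∑' n, ∑' k, f k n := (Summable.tsum_comm hG).symm
    _ = _ := by
        apply tsum_congr; intro n
        calc ∑' k, f k n
            = ∑' k : ℤ, ((-1)^n * x^(2*n) / ((2*n).factorial : ℝ)) * (a k * (k:ℝ)^(2*n)) := by
              apply tsum_congr; intro k; simp only [hf, mul_pow]; ring
          _ = ((-1)^n * x^(2*n) / ((2*n).factorial : ℝ)) * ∑' k : ℤ, a k * (k:ℝ)^(2*n) :=
              tsum_mul_left
          _ = _ := by ring

lemma my_charFun_eq_cos {a : ℤ → ℝ} (hpos : ∀ n : ℤ, 0 ≤ a n) (hsa : Summable a)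
    (hsym : ∀ n : ℤ, a n = a (-n)) (x : ℝ) :
    charFun a x = ((∑' k : ℤ, a k * Real.cos ((k:ℝ) * x) : ℝ) : ℂ) := by
  have hcos : Summable (fun k : ℤ => a k * Real.cos ((k:ℝ) * x)) := by
    apply Summable.of_abs
    apply Summable.of_nonneg_of_le (fun k => abs_nonneg _) (fun k => ?_) hsa
    rw [abs_mul, abs_of_nonneg (hpos k)]
    calc a k * |Real.cos ((k:ℝ)*x)| ≤ a k * 1 :=
          mul_le_mul_of_nonneg_left (Real.abs_cos_le_one _) (hpos k)
      _ = a k := mul_one _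
  have hsin : Summable (fun k : ℤ => a k * Real.sin ((k:ℝ) * x)) := by
    apply Summable.of_abs
    apply Summable.of_nonneg_of_le (fun k => abs_nonneg _) (fun k => ?_) hsa
    rw [abs_mul, abs_of_nonneg (hpos k)]
    calc a k * |Real.sin ((k:ℝ)*x)| ≤ a k * 1 :=
          mul_le_mul_of_nonneg_left (Real.abs_sin_le_one _) (hpos k)
      _ = a k := mul_one _
  have hterm : ∀ k : ℤ, (a k : ℂ) * Complex.exp (Complex.I * k * x) =
      ((a k * Real.cos ((k:ℝ)*x) : ℝ) : ℂ) +
        ((a k * Real.sin ((k:ℝ)*x) : ℝ) : ℂ) * Complex.I := by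
    intro k
    have : Complex.I * (k:ℂ) * (x:ℂ) = (((k:ℝ)*x : ℝ) : ℂ) * Complex.I := by push_cast; ring
    rw [this, Complex.exp_mul_I, ← Complex.ofReal_cos, ← Complex.ofReal_sin]
    push_cast
    ring
  have hsc : Summable (fun k : ℤ => ((a k * Real.cos ((k:ℝ)*x) : ℝ) : ℂ)) := by
    exact_mod_cast (Complex.summable_ofReal.2 hcos)
  have hss : Summable (fun k : ℤ => ((a k * Real.sin ((k:ℝ)*x) : ℝ) : ℂ) * Complex.I) :=
    ((Complex.summable_ofReal.2 hsin)).mul_right _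
  have hzero : (∑' k : ℤ, a k * Real.sin ((k:ℝ) * x)) = 0 := by
    have hrev := (Equiv.neg ℤ).tsum_eq (fun k : ℤ => a k * Real.sin ((k:ℝ) * x))
    simp only [Equiv.neg_apply] at hrev
    have : (fun k : ℤ => a (-k) * Real.sin (((-k : ℤ):ℝ) * x)) =
        (fun k : ℤ => -(a k * Real.sin ((k:ℝ) * x))) := by
      funext k
      rw [← hsym k]
      push_cast
      rw [neg_mul, Real.sin_neg]
      ring
    rw [this, tsum_neg] at hrev
    linarith
  calc charFun a x = ∑' k : ℤ, (((a k * Real.cos ((k:ℝ)*x) : ℝ) : ℂ) +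
        ((a k * Real.sin ((k:ℝ)*x) : ℝ) : ℂ) * Complex.I) := tsum_congr hterm
    _ = (∑' k : ℤ, ((a k * Real.cos ((k:ℝ)*x) : ℝ) : ℂ)) +
        (∑' k : ℤ, ((a k * Real.sin ((k:ℝ)*x) : ℝ) : ℂ) * Complex.I) := Summable.tsum_add hsc hss
    _ = ((∑' k : ℤ, a k * Real.cos ((k:ℝ)*x) : ℝ) : ℂ) := by
        rw [tsum_mul_right, ← Complex.ofReal_tsum, ← Complex.ofReal_tsum, hzero]
        simp

/-- The characteristic function of a symmetric random walk (nondegenerate at `0`)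
can be written as `f(x) = h(x^2)` for `h` analytic near `0` in `ℂ`, with
`h(0) = 1` and `h'(0) = -(1/2) ∑ k^2 a(k) < 0`. -/
theorem charFun_eq_h_of_sq (a : ℤ → ℝ) (ha : IsRandomWalk a)
    (hsym : ∀ n : ℤ, a n = a (-n)) (hnz : ∃ n : ℤ, n ≠ 0 ∧ a n ≠ 0) :
    ∃ h : ℂ → ℂ, ∃ U : Set ℂ, IsOpen U ∧ (0 : ℂ) ∈ U ∧ AnalyticOnNhd ℂ h U ∧
      (∃ ε : ℝ, 0 < ε ∧ ∀ x : ℝ, |x| < ε → charFun a x = h ((x : ℂ) ^ 2)) ∧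
      h 0 = 1 ∧
      deriv h 0 = ((-(1 / 2) * ∑' k : ℤ, (k : ℝ) ^ 2 * a k : ℝ) : ℂ) ∧
      (-(1 / 2) * ∑' k : ℤ, (k : ℝ) ^ 2 * a k : ℝ) < 0 := by
  obtain ⟨hpos, htsum, hlim⟩ := ha
  have hsa : Summable a := by
    by_contra hs
    rw [tsum_eq_zero_of_not_summable hs] at htsum
    norm_num at htsum
  have ha1 : ∀ n : ℤ, a n ≤ 1 := fun n => htsum ▸ Summable.le_tsum hsa n (fun m _ => hpos m)
  obtain ⟨r, hr0, hr1, N, hN⟩ := my_decay hpos ha1 hlim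
  obtain ⟨t, ht0, hM⟩ := my_expsum hpos hr0 hr1 hN
  set S : ℕ → ℝ := fun n => ∑' k : ℤ, a k * (k:ℝ)^(2*n) with hS
  set c : ℕ → ℂ := fun n => (((-1)^n * S n / ((2*n).factorial : ℝ) : ℝ) : ℂ) with hc
  set p := FormalMultilinearSeries.ofScalars ℂ c with hp
  set M : ℝ := ∑' k : ℤ, a k * Real.exp (t * |(k:ℝ)|) with hMdef
  have hM0 : 0 ≤ M := tsum_nonneg fun k => mul_nonneg (hpos k) (Real.exp_pos _).le
  have hSn : ∀ n : ℕ, (∑' k : ℤ, a k * (k:ℝ)^(2*n)) = S n := fun n => rfl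
  have hcn : ∀ n : ℕ, c n = ((((-1:ℝ))^n * S n / ((2*n).factorial : ℝ) : ℝ) : ℂ) := fun n => rfl
  have hSnn : ∀ n, 0 ≤ S n :=
    fun n => tsum_nonneg fun k => mul_nonneg (hpos k) ((even_two_mul n).pow_nonneg _)
  have hnormc : ∀ n : ℕ, ‖c n‖ = S n / ((2*n).factorial : ℝ) := by
    intro n
    rw [hcn n]
    rw [Complex.norm_real, Real.norm_eq_abs, abs_div, abs_mul, abs_pow, abs_neg, abs_one,
      one_pow, one_mul, abs_of_nonneg (hSnn n), Nat.abs_cast]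
  have hbound : ∀ n : ℕ, ‖p n‖ * ((t^2 : ℝ))^n ≤ M := by
    intro n
    rw [hp, FormalMultilinearSeries.ofScalars_norm, hnormc]
    have hmom : S n ≤ (((2*n).factorial : ℝ) / t^(2*n)) * M := (my_momsum hpos ht0 hM n).2
    have hfact : (0:ℝ) < ((2*n).factorial : ℝ) := by positivity
    rw [div_mul_eq_mul_div, div_le_iff₀ hfact]
    calc S n * (t^2)^n = S n * t^(2*n) := by rw [← pow_mul]
      _ ≤ (((2*n).factorial : ℝ) / t^(2*n)) * M * t^(2*n) :=
          mul_le_mul_of_nonneg_right hmom (by positivity)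
      _ = M * ((2*n).factorial : ℝ) := by field_simp [ht0.ne']
  have hρ : ENNReal.ofReal (t^2) ≤ p.radius := by
    have := p.le_radius_of_bound M (r := ⟨t^2, sq_nonneg t⟩) (fun n => hbound n)
    rwa [ENNReal.ofReal_eq_coe_nnreal (sq_nonneg t)]
  have hrpos : 0 < p.radius :=
    lt_of_lt_of_le (by simp [ENNReal.ofReal_pos]; positivity) hρ
  have hball : HasFPowerSeriesOnBall p.sum p 0 p.radius :=
    p.hasFPowerSeriesOnBall hrpos
  have hsum_eq : ∀ z : ℂ, p.sum z = ∑' n : ℕ, c n * z^n := by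
    intro z
    apply tsum_congr
    intro n
    rw [hp, FormalMultilinearSeries.ofScalars_apply_eq, smul_eq_mul]
  refine ⟨p.sum, EMetric.ball 0 p.radius, EMetric.isOpen_ball,
    EMetric.mem_ball_self hrpos, fun z hz => hball.analyticAt_of_mem hz,
    ⟨t, ht0, fun x hx => ?_⟩, ?_, ?_, ?_⟩
  · -- charFun a x = p.sum (x^2)
    rw [my_charFun_eq_cos hpos hsa hsym, my_fubini hpos hM hx, hsum_eq]
    rw [Complex.ofReal_tsum]
    apply tsum_congr
    intro n
    rw [hSn n]
    show _ = c n * ((x:ℂ)^2)^n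
    rw [hcn n]
    push_cast
    ring
  · -- h 0 = 1
    rw [hsum_eq 0]
    rw [tsum_eq_single 0 (by intro n hn; rw [zero_pow hn, mul_zero])]
    rw [pow_zero, mul_one]
    have hS0 : S 0 = 1 := by
      rw [← hSn 0]
      calc ∑' k : ℤ, a k * (k:ℝ)^(2*0) = ∑' k : ℤ, a k := by
            apply tsum_congr; intro k; norm_num
        _ = 1 := htsum
    show c 0 = 1
    rw [hcn 0, hS0]
    norm_num
  · -- deriv
    have hd : deriv p.sum 0 = p.coeff 1 := hball.hasFPowerSeriesAt.deriv
    rw [hd]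
    have hcoeff : p.coeff 1 = c 1 := by
      show (FormalMultilinearSeries.ofScalars ℂ c 1) (fun _ => 1) = c 1
      rw [FormalMultilinearSeries.ofScalars_apply_eq, pow_one, smul_eq_mul, mul_one]
    rw [hcoeff, hcn 1]
    have hT : (∑' k : ℤ, (k : ℝ) ^ 2 * a k) = S 1 := by
      rw [← hSn 1]
      apply tsum_congr
      intro k
      rw [pow_mul]
      ring_nf
    rw [hT]
    push_cast
    norm_num [Nat.factorial]
    ring
  · -- negativity
    obtain ⟨n₀, hn₀, hne⟩ := hnz
    have hsum1 : Summable (fun k : ℤ => (k:ℝ)^2 * a k) := by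
      apply ((my_momsum hpos ht0 hM 1).1).congr
      intro k
      rw [pow_mul]
      ring_nf
    have hTpos : 0 < ∑' k : ℤ, (k : ℝ) ^ 2 * a k := by
      apply Summable.tsum_pos hsum1 (fun k => mul_nonneg (sq_nonneg _) (hpos k)) n₀
      have h1 : 0 < a n₀ := lt_of_le_of_ne (hpos n₀) (Ne.symm hne)
      have h2 : ((n₀:ℝ))^2 > 0 := by
        have : (n₀:ℝ) ≠ 0 := Int.cast_ne_zero.2 hn₀
        positivity
      positivity
    linarith
end

section
/- Let a be a symmetric, primitive random walk on ℤ that has an even step size, with characteristic function f(x) = ∑_{k∈ℤ} a(k) e^{ikx} and return probabilities c_n. Suppose η ∈ (0,1) and φ : [1−η, 1] → [0, π] is continuous on [1−η, 1], continuously differentiable on (1−η, 1), satisfies φ(1) = 0 and f(φ(y)) = y for all y ∈ [1−η, 1]. Then there exists μ > 0 such that c_n + (1/π) ∫_{1−η}^{1} y^n φ'(y) dy = o(e^{−μn}) as n → ∞. -/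
open Filter Asymptotics

open Filter Asymptotics Set

namespace RW1

variable {a : ℤ → ℝ}

lemma summable_of_tsum_one (h : (∑' n : ℤ, a n) = 1) : Summable a := by
  by_contra hs
  rw [tsum_eq_zero_of_not_summable hs] at h
  norm_num at h

/-- the real characteristic function -/
noncomputable def g (a : ℤ → ℝ) (x : ℝ) : ℝ := ∑' k : ℤ, a k * Real.cos (k * x)

lemma summable_g (ha : Summable a) (hpos : ∀ n, 0 ≤ a n) (x : ℝ) :
    Summable (fun k : ℤ => a k * Real.cos (k * x)) := by
  apply Summable.of_norm_bounded ha
  intro k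
  rw [norm_mul, Real.norm_eq_abs, Real.norm_eq_abs, abs_of_nonneg (hpos k)]
  calc a k * |Real.cos (k * x)| ≤ a k * 1 :=
        mul_le_mul_of_nonneg_left (Real.abs_cos_le_one _) (hpos k)
    _ = a k := mul_one _

lemma summable_sin (ha : Summable a) (hpos : ∀ n, 0 ≤ a n) (x : ℝ) :
    Summable (fun k : ℤ => a k * Real.sin (k * x)) := by
  apply Summable.of_norm_bounded ha
  intro k
  rw [norm_mul, Real.norm_eq_abs, Real.norm_eq_abs, abs_of_nonneg (hpos k)]
  calc a k * |Real.sin (k * x)| ≤ a k * 1 :=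
        mul_le_mul_of_nonneg_left (Real.abs_sin_le_one _) (hpos k)
    _ = a k := mul_one _

lemma tsum_sin_eq_zero (ha : Summable a) (hsym : ∀ n : ℤ, a n = a (-n)) (x : ℝ) :
    (∑' k : ℤ, a k * Real.sin (k * x)) = 0 := by
  have h := (Equiv.neg ℤ).tsum_eq (fun k : ℤ => a k * Real.sin (k * x))
  have h2 : ∀ k : ℤ, a (Equiv.neg ℤ k) * Real.sin ((Equiv.neg ℤ k : ℤ) * x)
      = -(a k * Real.sin (k * x)) := by
    intro k
    simp only [Equiv.neg_apply]
    rw [← hsym k]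
    push_cast
    rw [neg_mul, Real.sin_neg]
    ring
  rw [tsum_congr h2, tsum_neg] at h
  linarith

lemma charFun_eq_g (ha : Summable a) (hpos : ∀ n, 0 ≤ a n) (hsym : ∀ n : ℤ, a n = a (-n))
    (x : ℝ) : charFun a x = ((g a x : ℝ) : ℂ) := by
  have hterm : ∀ k : ℤ, (a k : ℂ) * Complex.exp (Complex.I * k * x)
      = ((a k * Real.cos (k * x) : ℝ) : ℂ) + ((a k * Real.sin (k * x) : ℝ) : ℂ) * Complex.I := by
    intro k
    have : Complex.I * k * x = ((k * x : ℝ) : ℂ) * Complex.I := by push_cast; ring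
    rw [this, Complex.exp_mul_I]
    rw [← Complex.ofReal_cos, ← Complex.ofReal_sin]
    push_cast
    ring
  rw [charFun, tsum_congr hterm, Summable.tsum_add, tsum_mul_right, ← Complex.ofReal_tsum,
    ← Complex.ofReal_tsum, tsum_sin_eq_zero ha hsym x]
  · simp [g]
  · exact ((summable_g ha hpos x).map Complex.ofRealHom Complex.continuous_ofReal)
  · exact (((summable_sin ha hpos x).map Complex.ofRealHom Complex.continuous_ofReal).mul_right Complex.I)

end RW1

namespace RW1

variable {a : ℤ → ℝ}

lemma summable_prod_a (ha : Summable a) (hpos : ∀ n, 0 ≤ a n) (n : ℕ) :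
    Summable (fun k : Fin n → ℤ => ∏ i, a (k i)) := by
  induction n with
  | zero =>
    exact summable_of_finite_support (Set.Finite.subset (Set.finite_univ) (by simp))
  | succ n ih =>
    rw [← (Equiv.summable_iff (Fin.consEquiv (fun _ : Fin (n+1) => ℤ)))]
    refine Summable.congr (ha.mul_of_nonneg ih hpos
      (fun k => Finset.prod_nonneg fun i _ => hpos _)) ?_
    rintro ⟨z1, z2⟩
    simp only [Function.comp_apply, Fin.consEquiv_apply, Fin.prod_univ_succ,
      Fin.cons_zero, Fin.cons_succ]

lemma norm_term (k : ℤ) (x : ℝ) (hpos : ∀ n, 0 ≤ a n) :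
    ‖(a k : ℂ) * Complex.exp (Complex.I * k * x)‖ = a k := by
  rw [norm_mul]
  have : Complex.I * k * x = ((k * x : ℝ) : ℂ) * Complex.I := by push_cast; ring
  rw [this]
  rw [Complex.norm_exp_ofReal_mul_I,
    Complex.norm_real, Real.norm_eq_abs, abs_of_nonneg (hpos k), mul_one]

lemma charFun_pow (ha : Summable a) (hpos : ∀ n, 0 ≤ a n) (x : ℝ) (n : ℕ) :
    (charFun a x) ^ n = ∑' k : Fin n → ℤ,
      ((∏ i, a (k i) : ℝ) : ℂ) * Complex.exp (Complex.I * (∑ i, k i : ℤ) * x) := by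
  induction n with
  | zero =>
    rw [pow_zero]
    have : ∀ k : Fin 0 → ℤ, ((∏ i, a (k i) : ℝ) : ℂ)
        * Complex.exp (Complex.I * (∑ i, k i : ℤ) * x) = 1 := by
      intro k; simp
    rw [tsum_congr this, tsum_const]
    simp
  | succ n ih =>
    have hsumF : Summable (fun k : ℤ => ‖(a k : ℂ) * Complex.exp (Complex.I * k * x)‖) := by
      rw [show (fun k : ℤ => ‖(a k : ℂ) * Complex.exp (Complex.I * k * x)‖) = a from
        funext fun k => norm_term k x hpos]
      exact ha
    have hsumG : Summable (fun m : Fin n → ℤ => ‖((∏ i, a (m i) : ℝ) : ℂ)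
        * Complex.exp (Complex.I * (∑ i, m i : ℤ) * x)‖) := by
      have : ∀ m : Fin n → ℤ, ‖((∏ i, a (m i) : ℝ) : ℂ)
          * Complex.exp (Complex.I * (∑ i, m i : ℤ) * x)‖ = ∏ i, a (m i) := by
        intro m
        rw [norm_mul]
        have h2 : Complex.I * (∑ i, m i : ℤ) * x = (((∑ i, m i : ℤ) * x : ℝ) : ℂ) * Complex.I := by
          push_cast; ring
        rw [h2, Complex.norm_exp_ofReal_mul_I,
          Complex.norm_real, Real.norm_eq_abs, mul_one, abs_of_nonneg (Finset.prod_nonneg fun i _ => hpos _)]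
      rw [funext this]
      exact summable_prod_a ha hpos n
    rw [pow_succ, ih, charFun, mul_comm,
      tsum_mul_tsum_of_summable_norm hsumF hsumG]
    rw [← ((Fin.consEquiv (fun _ : Fin (n+1) => ℤ)).tsum_eq
      (fun k : Fin (n+1) → ℤ => ((∏ i, a (k i) : ℝ) : ℂ)
      * Complex.exp (Complex.I * (∑ i, k i : ℤ) * x)))]
    apply tsum_congr
    intro z
    obtain ⟨z1, z2⟩ := z
    simp only [Fin.consEquiv_apply, Fin.prod_univ_succ, Fin.sum_univ_succ,
      Fin.cons_zero, Fin.cons_succ]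
    push_cast
    rw [mul_add, add_mul, Complex.exp_add]
    ring

end RW1

namespace RW1

variable {a : ℤ → ℝ}

lemma integral_exp_int (m : ℤ) :
    (∫ x in (-Real.pi)..Real.pi, Complex.exp (Complex.I * m * x))
      = if m = 0 then (2 * Real.pi : ℂ) else 0 := by
  by_cases hm : m = 0
  · simp [hm, two_mul]
  · rw [if_neg hm]
    have hc : (Complex.I * m) ≠ 0 := by
      simp [Complex.I_ne_zero, Complex.ext_iff]
      exact_mod_cast hm
    rw [integral_exp_mul_complex hc]
    have : Complex.exp (Complex.I * m * Real.pi) = Complex.exp (Complex.I * m * (-Real.pi : ℝ)) := by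
      rw [show Complex.I * m * (Real.pi : ℂ) = Complex.I * m * ((-Real.pi : ℝ) : ℂ)
        + m * (2 * Real.pi * Complex.I) by push_cast; ring, Complex.exp_add,
        Complex.exp_int_mul_two_pi_mul_I, mul_one]
    rw [this, sub_self, zero_div]

lemma continuous_g (ha : Summable a) (hpos : ∀ n, 0 ≤ a n) : Continuous (g a) := by
  apply continuous_tsum (u := a) ?_ ha
  · intro k x
    rw [norm_mul, Real.norm_eq_abs, Real.norm_eq_abs, abs_of_nonneg (hpos k)]
    calc a k * |Real.cos (k * x)| ≤ a k * 1 :=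
          mul_le_mul_of_nonneg_left (Real.abs_cos_le_one _) (hpos k)
      _ = a k := mul_one _
  · intro k
    continuity

lemma integral_g_pow (ha : Summable a) (hpos : ∀ n, 0 ≤ a n) (hsym : ∀ n : ℤ, a n = a (-n))
    (n : ℕ) :
    (∫ x in (-Real.pi)..Real.pi, (g a x) ^ n) = 2 * Real.pi * returnProb a n := by
  have hle : (-Real.pi) ≤ Real.pi := by linarith [Real.pi_pos]
  set F : (Fin n → ℤ) → ℝ → ℂ := fun k x =>
    ((∏ i, a (k i) : ℝ) : ℂ) * Complex.exp (Complex.I * (∑ i, k i : ℤ) * x) with hF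
  have hFc : ∀ k, Continuous (F k) := by
    intro k
    apply continuous_const.mul
    apply Complex.continuous_exp.comp
    exact (continuous_const.mul Complex.continuous_ofReal)
  have hnormF : ∀ k x, ‖F k x‖ = ∏ i, a (k i) := by
    intro k x
    rw [hF, norm_mul]
    have h2 : Complex.I * (∑ i, k i : ℤ) * x = (((∑ i, k i : ℤ) * x : ℝ) : ℂ) * Complex.I := by
      push_cast; ring
    rw [h2, Complex.norm_exp_ofReal_mul_I,
      Complex.norm_real, Real.norm_eq_abs, mul_one, abs_of_nonneg (Finset.prod_nonneg fun i _ => hpos _)]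
  have hμ : (MeasureTheory.volume (Set.Ioc (-Real.pi) Real.pi)).toReal = 2 * Real.pi := by
    rw [Real.volume_Ioc, ENNReal.toReal_ofReal (by linarith [Real.pi_pos])]
    ring
  have hInt : ∀ k, MeasureTheory.Integrable (F k)
      (MeasureTheory.volume.restrict (Set.Ioc (-Real.pi) Real.pi)) :=
    fun k => (hFc k).integrableOn_Ioc
  have hIntNorm : Summable (fun k : Fin n → ℤ =>
      ∫ x in Set.Ioc (-Real.pi) Real.pi, ‖F k x‖) := by
    have : ∀ k : Fin n → ℤ, (∫ x in Set.Ioc (-Real.pi) Real.pi, ‖F k x‖)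
        = (∏ i, a (k i)) * (2 * Real.pi) := by
      intro k
      rw [show (fun x => ‖F k x‖) = fun _ : ℝ => ∏ i, a (k i) from funext (hnormF k)]
      rw [MeasureTheory.setIntegral_const, MeasureTheory.measureReal_def, hμ, smul_eq_mul, mul_comm]
    rw [funext this]
    exact (summable_prod_a ha hpos n).mul_right _
  have key : (∫ x in Set.Ioc (-Real.pi) Real.pi, (charFun a x) ^ n)
      = ∑' k : Fin n → ℤ, ∫ x in Set.Ioc (-Real.pi) Real.pi, F k x := by
    rw [MeasureTheory.integral_tsum_of_summable_integral_norm hInt hIntNorm]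
    apply MeasureTheory.integral_congr_ae
    filter_upwards with x
    simp only [hF]
    exact charFun_pow ha hpos x n
  have hsingle : ∀ k : Fin n → ℤ, (∫ x in Set.Ioc (-Real.pi) Real.pi, F k x)
      = (((if (∑ i, k i) = 0 then ∏ i, a (k i) else 0) * (2 * Real.pi) : ℝ) : ℂ) := by
    intro k
    rw [← intervalIntegral.integral_of_le hle]
    rw [hF]
    simp only []
    rw [intervalIntegral.integral_const_mul, integral_exp_int]
    split_ifs with h
    · push_cast; ring
    · push_cast; ring
  have key2 : (∫ x in Set.Ioc (-Real.pi) Real.pi, (charFun a x) ^ n)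
      = ((returnProb a n * (2 * Real.pi) : ℝ) : ℂ) := by
    rw [key, tsum_congr hsingle, ← Complex.ofReal_tsum, returnProb, tsum_mul_right]
  have hgx : (∫ x in (-Real.pi)..Real.pi, (charFun a x) ^ n)
      = (((∫ x in (-Real.pi)..Real.pi, (g a x) ^ n) : ℝ) : ℂ) := by
    have h1 : (∫ x in (-Real.pi)..Real.pi, (charFun a x) ^ n)
        = ∫ x in (-Real.pi)..Real.pi, (((g a x) ^ n : ℝ) : ℂ) := by
      apply intervalIntegral.integral_congr
      intro x _
      show charFun a x ^ n = _
      rw [charFun_eq_g ha hpos hsym x]; push_cast; ring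
    rw [h1]
    exact_mod_cast RCLike.intervalIntegral_ofReal (𝕜 := ℂ) (f := fun x => (g a x) ^ n)
  rw [← intervalIntegral.integral_of_le hle] at key2
  rw [hgx] at key2
  have := Complex.ofReal_inj.mp key2
  rw [this]; ring

end RW1

namespace RW1

variable {a : ℤ → ℝ}

lemma g_even (x : ℝ) : g a (-x) = g a x := by
  unfold g
  apply tsum_congr
  intro k
  rw [mul_neg, Real.cos_neg]

lemma integral_g_pow_half (ha : Summable a) (hpos : ∀ n, 0 ≤ a n) (hsym : ∀ n : ℤ, a n = a (-n))
    (n : ℕ) :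
    (∫ x in (0:ℝ)..Real.pi, (g a x) ^ n) = Real.pi * returnProb a n := by
  have hgc : Continuous (fun x => (g a x) ^ n) := (continuous_g ha hpos).pow n
  have h1 : (∫ x in (0:ℝ)..Real.pi, (g a x) ^ n)
      = ∫ x in (-Real.pi)..(0:ℝ), (g a x) ^ n := by
    have h0 := intervalIntegral.integral_comp_neg (a := 0) (b := Real.pi) (fun x => (g a x) ^ n)
    rw [neg_zero] at h0
    rw [← h0]
    apply intervalIntegral.integral_congr
    intro x _
    simp [g_even]
  have h2 : (∫ x in (-Real.pi)..(0:ℝ), (g a x) ^ n) + (∫ x in (0:ℝ)..Real.pi, (g a x) ^ n)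
      = ∫ x in (-Real.pi)..Real.pi, (g a x) ^ n :=
    intervalIntegral.integral_add_adjacent_intervals
      (hgc.intervalIntegrable _ _) (hgc.intervalIntegrable _ _)
  have h3 := integral_g_pow ha hpos hsym n
  rw [← h2, ← h1] at h3
  linarith

lemma g_zero (h1 : (∑' n : ℤ, a n) = 1) : g a 0 = 1 := by
  unfold g
  simp only [mul_zero, Real.cos_zero, mul_one]
  exact h1

lemma g_le_one (ha : Summable a) (hpos : ∀ n, 0 ≤ a n) (h1 : (∑' n : ℤ, a n) = 1) (x : ℝ) :
    g a x ≤ 1 := by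
  rw [← h1]
  apply (summable_g ha hpos x).tsum_le_tsum _ ha
  intro k
  calc a k * Real.cos (k * x) ≤ a k * 1 :=
        mul_le_mul_of_nonneg_left (Real.cos_le_one _) (hpos k)
    _ = a k := mul_one _

lemma neg_one_le_g (ha : Summable a) (hpos : ∀ n, 0 ≤ a n) (h1 : (∑' n : ℤ, a n) = 1) (x : ℝ) :
    -1 ≤ g a x := by
  rw [← h1, ← tsum_neg]
  apply (ha.neg).tsum_le_tsum _ (summable_g ha hpos x)
  intro k
  have := Real.neg_one_le_cos (k * x)
  nlinarith [hpos k]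

lemma g_lt_one (ha : Summable a) (hpos : ∀ n, 0 ≤ a n) (h1 : (∑' n : ℤ, a n) = 1)
    (hprim : AddSubgroup.closure {n : ℤ | a n ≠ 0} = ⊤)
    {x : ℝ} (hx : 0 < x) (hx2 : x ≤ Real.pi) : g a x < 1 := by
  rcases lt_or_eq_of_le (g_le_one ha hpos h1 x) with h | h
  · exact h
  exfalso
  have hsum : Summable (fun k : ℤ => a k * (1 - Real.cos (k * x))) := by
    refine Summable.congr (ha.sub (summable_g ha hpos x)) ?_
    intro k; ring
  have htsum : (∑' k : ℤ, a k * (1 - Real.cos (k * x))) = 0 := by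
    have : (∑' k : ℤ, a k * (1 - Real.cos (k * x)))
        = (∑' k : ℤ, a k) - ∑' k : ℤ, a k * Real.cos (k * x) := by
      rw [← Summable.tsum_sub ha (summable_g ha hpos x)]
      apply tsum_congr; intro k; ring
    rw [this, h1]
    have : (∑' k : ℤ, a k * Real.cos (k * x)) = g a x := rfl
    rw [this, h]
    ring
  have hnn : ∀ k : ℤ, 0 ≤ a k * (1 - Real.cos (k * x)) := fun k =>
    mul_nonneg (hpos k) (by linarith [Real.cos_le_one ((k : ℝ) * x)])
  have hzero : ∀ k : ℤ, a k * (1 - Real.cos (k * x)) = 0 := fun k =>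
    le_antisymm (htsum ▸ Summable.le_tsum hsum k (fun j _ => hnn j)) (hnn k)
  have hcos : ∀ k : ℤ, a k ≠ 0 → Real.cos (k * x) = 1 := by
    intro k hk
    have := hzero k
    rcases mul_eq_zero.mp this with h' | h'
    · exact absurd h' hk
    · linarith
  set H : AddSubgroup ℤ :=
    { carrier := {k : ℤ | ∃ m : ℤ, (k : ℝ) * x = m * (2 * Real.pi)}
      zero_mem' := ⟨0, by simp⟩
      add_mem' := by
        rintro p q ⟨m1, h1'⟩ ⟨m2, h2'⟩
        exact ⟨m1 + m2, by push_cast; rw [add_mul, h1', h2']; ring⟩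
      neg_mem' := by
        rintro p ⟨m, hm⟩
        exact ⟨-m, by push_cast; rw [neg_mul, hm]; ring⟩ } with hH
  have hsub : {n : ℤ | a n ≠ 0} ⊆ (H : Set ℤ) := by
    intro k hk
    obtain ⟨m, hm⟩ := (Real.cos_eq_one_iff _).mp (hcos k hk)
    exact ⟨m, hm.symm⟩
  have htop : (⊤ : AddSubgroup ℤ) ≤ H := by
    rw [← hprim]
    exact (AddSubgroup.closure_le H).mpr hsub
  have h1m : (1 : ℤ) ∈ H := htop (AddSubgroup.mem_top 1)
  obtain ⟨m, hm⟩ := h1m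
  rw [Int.cast_one, one_mul] at hm
  have hpi := Real.pi_pos
  rcases le_or_gt m 0 with hm0 | hm0
  · have : (m : ℝ) ≤ 0 := by exact_mod_cast hm0
    nlinarith
  · have : (1 : ℝ) ≤ (m : ℝ) := by exact_mod_cast hm0
    nlinarith

lemma neg_one_lt_g (ha : Summable a) (hpos : ∀ n, 0 ≤ a n) (h1 : (∑' n : ℤ, a n) = 1)
    (hprim : AddSubgroup.closure {n : ℤ | a n ≠ 0} = ⊤)
    (heven : ∃ n : ℤ, Even n ∧ a n ≠ 0)
    {x : ℝ} (hx : 0 < x) (hx2 : x ≤ Real.pi) : -1 < g a x := by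
  rcases lt_or_eq_of_le (neg_one_le_g ha hpos h1 x) with h | h
  · exact h
  exfalso
  have hsum : Summable (fun k : ℤ => a k * (1 + Real.cos (k * x))) := by
    refine Summable.congr (ha.add (summable_g ha hpos x)) ?_
    intro k; ring
  have htsum : (∑' k : ℤ, a k * (1 + Real.cos (k * x))) = 0 := by
    have heq : (∑' k : ℤ, a k * (1 + Real.cos (k * x)))
        = (∑' k : ℤ, a k) + ∑' k : ℤ, a k * Real.cos (k * x) := by
      rw [← Summable.tsum_add ha (summable_g ha hpos x)]
      apply tsum_congr; intro k; ring
    rw [heq, h1]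
    have h2 : (∑' k : ℤ, a k * Real.cos (k * x)) = g a x := rfl
    rw [h2, ← h]
    ring
  have hnn : ∀ k : ℤ, 0 ≤ a k * (1 + Real.cos (k * x)) := fun k =>
    mul_nonneg (hpos k) (by linarith [Real.neg_one_le_cos ((k : ℝ) * x)])
  have hzero : ∀ k : ℤ, a k * (1 + Real.cos (k * x)) = 0 := fun k =>
    le_antisymm (htsum ▸ Summable.le_tsum hsum k (fun j _ => hnn j)) (hnn k)
  have hcos : ∀ k : ℤ, a k ≠ 0 → Real.cos (k * x) = -1 := by
    intro k hk
    have h0 := hzero k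
    rcases mul_eq_zero.mp h0 with h' | h'
    · exact absurd h' hk
    · nlinarith [Real.neg_one_le_cos (k * x)]
  set H : AddSubgroup ℤ :=
    { carrier := {k : ℤ | ∃ m : ℤ, (k : ℝ) * x = m * Real.pi}
      zero_mem' := ⟨0, by simp⟩
      add_mem' := by
        rintro p q ⟨m1, h1'⟩ ⟨m2, h2'⟩
        exact ⟨m1 + m2, by push_cast; rw [add_mul, h1', h2']; ring⟩
      neg_mem' := by
        rintro p ⟨m, hm⟩
        exact ⟨-m, by push_cast; rw [neg_mul, hm]; ring⟩ } with hH
  have hsub : {n : ℤ | a n ≠ 0} ⊆ (H : Set ℤ) := by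
    intro k hk
    have hc2 : Real.cos (2 * ((k : ℝ) * x)) = 1 := by
      rw [Real.cos_two_mul, hcos k hk]; norm_num
    obtain ⟨m, hm⟩ := (Real.cos_eq_one_iff _).mp hc2
    exact ⟨m, by linarith [hm]⟩
  have htop : (⊤ : AddSubgroup ℤ) ≤ H := by
    rw [← hprim]
    exact (AddSubgroup.closure_le H).mpr hsub
  have h1m : (1 : ℤ) ∈ H := htop (AddSubgroup.mem_top 1)
  obtain ⟨m, hm⟩ := h1m
  rw [Int.cast_one, one_mul] at hm
  have hpi := Real.pi_pos
  -- x = m * π with 0 < x ≤ π forces m = 1, x = π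
  have hm1 : m = 1 := by
    rcases le_or_gt m 0 with hm0 | hm0
    · exfalso
      have : (m : ℝ) ≤ 0 := by exact_mod_cast hm0
      nlinarith
    · rcases lt_or_ge m 2 with hm2 | hm2
      · omega
      · exfalso
        have : (2 : ℝ) ≤ (m : ℝ) := by exact_mod_cast hm2
        nlinarith
  have hxpi : x = Real.pi := by rw [hm1] at hm; simpa using hm
  obtain ⟨n, hn, han⟩ := heven
  obtain ⟨j, hj⟩ := hn
  have h1' : Real.cos (n * x) = -1 := hcos n han
  have h2' : Real.cos (n * x) = 1 := by
    rw [hxpi, hj]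
    have : ((j + j : ℤ) : ℝ) * Real.pi = (j : ℝ) * (2 * Real.pi) := by push_cast; ring
    rw [this]
    exact Real.cos_int_mul_two_pi j
  rw [h1'] at h2'
  norm_num at h2'

end RW1

/-- Type 1 estimate: for a symmetric, primitive random walk with an even step size,
`c_n + (1/π) ∫_(1-η)^1 y^n φ'(y) dy = o(e^(-μn))` for some `μ > 0`, where `φ` is a
local inverse of the characteristic function. -/
theorem returnProb_integral_estimate_type1 (a : ℤ → ℝ) (ha : IsRandomWalk a)
    (hsym : ∀ n : ℤ, a n = a (-n))
    (hprim : AddSubgroup.closure {n : ℤ | a n ≠ 0} = ⊤)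
    (heven : ∃ n : ℤ, Even n ∧ a n ≠ 0)
    (η : ℝ) (hη : η ∈ Set.Ioo (0 : ℝ) 1) (φ : ℝ → ℝ)
    (hmaps : ∀ y ∈ Set.Icc (1 - η) 1, φ y ∈ Set.Icc 0 Real.pi)
    (hcont : ContinuousOn φ (Set.Icc (1 - η) 1))
    (hdiff : ∀ y ∈ Set.Ioo (1 - η) 1, DifferentiableAt ℝ φ y)
    (hderiv_cont : ContinuousOn (deriv φ) (Set.Ioo (1 - η) 1))
    (hone : φ 1 = 0)
    (hinv : ∀ y ∈ Set.Icc (1 - η) 1, charFun a (φ y) = (y : ℂ)) :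
    ∃ μ : ℝ, 0 < μ ∧
      (fun n : ℕ => returnProb a n + (1 / Real.pi) * ∫ y in (1 - η)..1, y ^ n * deriv φ y)
        =o[Filter.atTop] fun n : ℕ => Real.exp (-μ * n) := by
  obtain ⟨hpos, h1, _⟩ := ha
  have hsummable : Summable a := RW1.summable_of_tsum_one h1
  set A : ℝ := 1 - η with hAdef
  have hA0 : 0 < A := by simp only [hAdef]; linarith [hη.2]
  have hA1 : A < 1 := by simp only [hAdef]; linarith [hη.1]
  have hpi := Real.pi_pos
  have ginv : ∀ y ∈ Set.Icc A 1, RW1.g a (φ y) = y := by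
    intro y hy
    have h := hinv y hy
    rw [RW1.charFun_eq_g hsummable hpos hsym] at h
    exact_mod_cast h
  have hgcont : Continuous (RW1.g a) := RW1.continuous_g hsummable hpos
  have hinj : Set.InjOn φ (Set.Icc A 1) := by
    intro u hu v hv huv
    have h1' := ginv u hu
    have h2' := ginv v hv
    rw [huv, h2'] at h1'
    exact h1'.symm
  have hanti : StrictAntiOn φ (Set.Icc A 1) := by
    apply ContinuousOn.strictAntiOn_of_injOn_Icc hA1.le _ hcont hinj
    rw [hone]
    exact (hmaps A ⟨le_refl A, hA1.le⟩).1
  have hderiv_le : ∀ y ∈ Set.Ioo A 1, deriv φ y ≤ 0 := by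
    intro y hy
    have hd : HasDerivAt φ (deriv φ y) y := (hdiff y hy).hasDerivAt
    have T : Filter.Tendsto (slope φ y) (nhdsWithin y (Set.Ioi y)) (nhds (deriv φ y)) :=
      (hasDerivAt_iff_tendsto_slope.mp hd).mono_left
        (nhdsWithin_mono y (fun z hz => Set.mem_compl_singleton_iff.mpr (hz : y < z).ne'))
    apply le_of_tendsto T
    filter_upwards [Ioo_mem_nhdsGT_of_mem (Set.mem_Ico.mpr ⟨le_refl y, hy.2⟩)] with z hz
    rw [slope_def_field]
    have hzIcc : z ∈ Set.Icc A 1 := ⟨(hy.1.trans hz.1).le, hz.2.le⟩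
    have hyIcc : y ∈ Set.Icc A 1 := ⟨hy.1.le, hy.2.le⟩
    have hlt : φ z < φ y := hanti hyIcc hzIcc hz.1
    exact div_nonpos_of_nonpos_of_nonneg (by linarith) (by linarith [hz.1])
  -- integrability of deriv φ on (A, 1)
  have hIoo : MeasureTheory.IntegrableOn (deriv φ) (Set.Ioo A 1) := by
    set d : ℝ := (1 - A) / 3 with hd
    have hdpos : 0 < d := by simp only [hd]; linarith
    set aseq : ℕ → ℝ := fun i => A + d * (1 / (i + 1)) with haseq
    set bseq : ℕ → ℝ := fun i => 1 - d * (1 / (i + 1)) with hbseq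
    have hfrac : ∀ i : ℕ, 0 < (1 : ℝ) / (i + 1) ∧ (1 : ℝ) / (i + 1) ≤ 1 := by
      intro i
      constructor
      · positivity
      · rw [div_le_one (by positivity)]
        have : (0:ℝ) ≤ i := Nat.cast_nonneg i
        linarith
    have hsubset : ∀ i : ℕ, Set.Icc (aseq i) (bseq i) ⊆ Set.Ioo A 1 := by
      intro i
      apply Set.Icc_subset_Ioo
      · simp only [haseq]; nlinarith [(hfrac i).1]
      · simp only [hbseq]; nlinarith [(hfrac i).1]
    have hab : ∀ i : ℕ, aseq i ≤ bseq i := by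
      intro i
      simp only [haseq, hbseq, hd]
      nlinarith [(hfrac i).1, (hfrac i).2]
    have htend0 : Filter.Tendsto (fun i : ℕ => d * (1 / ((i : ℝ) + 1)))
        Filter.atTop (nhds 0) := by
      have h2 := tendsto_one_div_add_atTop_nhds_zero_nat.const_mul d
      simpa using h2
    have hatend : Filter.Tendsto aseq Filter.atTop (nhds A) := by
      have h2 := htend0.const_add A
      simpa [haseq] using h2
    have hbtend : Filter.Tendsto bseq Filter.atTop (nhds 1) := by
      have h2 := (htend0.const_mul (-1)).const_add 1
      have h3 : (fun i : ℕ => 1 + (-1) * (d * (1 / ((i:ℝ) + 1)))) = bseq := by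
        funext i; simp only [hbseq]; ring
      rw [h3] at h2
      simpa using h2
    have cover := MeasureTheory.aecover_Ioo_of_Icc (μ := MeasureTheory.volume)
      (a := aseq) (b := bseq) (A := A) (B := 1) hatend hbtend
    have hcontsub : ∀ i : ℕ, ContinuousOn (deriv φ) (Set.Icc (aseq i) (bseq i)) :=
      fun i => hderiv_cont.mono (hsubset i)
    have hfi : ∀ i : ℕ, MeasureTheory.IntegrableOn (deriv φ) (Set.Icc (aseq i) (bseq i))
        (MeasureTheory.volume.restrict (Set.Ioo A 1)) := by
      intro i
      rw [MeasureTheory.IntegrableOn, MeasureTheory.Measure.restrict_restrict measurableSet_Icc,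
        Set.inter_eq_self_of_subset_left (hsubset i)]
      exact (hcontsub i).integrableOn_compact isCompact_Icc
    have hIccmem : ∀ i : ℕ, aseq i ∈ Set.Ioo A 1 ∧ bseq i ∈ Set.Ioo A 1 := by
      intro i
      exact ⟨hsubset i ⟨le_refl _, hab i⟩, hsubset i ⟨hab i, le_refl _⟩⟩
    have hbound : ∀ i : ℕ, (∫ x in Set.Icc (aseq i) (bseq i), ‖deriv φ x‖
        ∂(MeasureTheory.volume.restrict (Set.Ioo A 1))) ≤ Real.pi := by
      intro i
      have e1 : (∫ x in Set.Icc (aseq i) (bseq i), ‖deriv φ x‖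
          ∂(MeasureTheory.volume.restrict (Set.Ioo A 1)))
          = ∫ x in Set.Icc (aseq i) (bseq i), ‖deriv φ x‖ := by
        rw [MeasureTheory.Measure.restrict_restrict measurableSet_Icc,
          Set.inter_eq_self_of_subset_left (hsubset i)]
      rw [e1, MeasureTheory.integral_Icc_eq_integral_Ioc,
        ← intervalIntegral.integral_of_le (hab i)]
      have huIcc : Set.uIcc (aseq i) (bseq i) = Set.Icc (aseq i) (bseq i) :=
        Set.uIcc_of_le (hab i)
      have hcongr : ∀ x ∈ Set.uIcc (aseq i) (bseq i), ‖deriv φ x‖ = -deriv φ x := by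
        intro x hx
        rw [huIcc] at hx
        rw [Real.norm_eq_abs, abs_of_nonpos (hderiv_le x (hsubset i hx))]
      rw [intervalIntegral.integral_congr hcongr, intervalIntegral.integral_neg]
      have hftc : (∫ x in (aseq i)..(bseq i), deriv φ x) = φ (bseq i) - φ (aseq i) := by
        apply intervalIntegral.integral_eq_sub_of_hasDerivAt
        · intro x hx
          rw [huIcc] at hx
          exact (hdiff x (hsubset i hx)).hasDerivAt
        · exact (huIcc ▸ (hcontsub i)).intervalIntegrable
      rw [hftc]
      have hma := hmaps (aseq i) ⟨(hIccmem i).1.1.le, (hIccmem i).1.2.le⟩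
      have hmb := hmaps (bseq i) ⟨(hIccmem i).2.1.le, (hIccmem i).2.2.le⟩
      have := hma.1; have := hma.2; have := hmb.1; have := hmb.2
      linarith [hma.1, hma.2, hmb.1, hmb.2]
    exact cover.integrable_of_integral_norm_bounded Real.pi hfi
      (Filter.Eventually.of_forall hbound)
  have hIccInt : MeasureTheory.IntegrableOn (deriv φ) (Set.Icc A 1) := by
    rw [integrableOn_Icc_iff_integrableOn_Ioo]
    exact hIoo
  -- the inner boundary point x₀ = φ(1-η)
  set x₀ : ℝ := φ A with hx₀def
  have hx₀mem : x₀ ∈ Set.Icc 0 Real.pi := hmaps A ⟨le_refl A, hA1.le⟩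
  have hgA : RW1.g a x₀ = A := ginv A ⟨le_refl A, hA1.le⟩
  have hx₀pos : 0 < x₀ := by
    rcases lt_or_eq_of_le hx₀mem.1 with h | h
    · exact h
    · exfalso
      have hg0 : RW1.g a 0 = 1 := RW1.g_zero h1
      rw [← h, hg0] at hgA
      linarith
  have hx₀pi : x₀ ≤ Real.pi := hx₀mem.2
  -- substitution
  have hsub : ∀ n : ℕ, (∫ y in A..(1:ℝ), y ^ n * deriv φ y)
      = -(∫ u in (0:ℝ)..x₀, (RW1.g a u) ^ n) := by
    intro n
    set G : ℝ → ℝ := fun u => (RW1.g a u) ^ n with hG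
    have hGc : Continuous G := hgcont.pow n
    have huIcc : Set.uIcc A (1:ℝ) = Set.Icc A 1 := Set.uIcc_of_le hA1.le
    have hcomp : (∫ y in A..(1:ℝ), deriv φ y • G (φ y)) = ∫ u in (φ A)..(φ 1), G u := by
      apply intervalIntegral.integral_comp_smul_deriv''' (f := φ) (f' := deriv φ) (g := G)
      · rw [huIcc]; exact hcont
      · intro x hx
        rw [min_eq_left hA1.le, max_eq_right hA1.le] at hx
        exact ((hdiff x hx).hasDerivAt).hasDerivWithinAt
      · exact hGc.continuousOn
      · have hK : IsCompact (φ '' Set.uIcc A 1) := by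
          rw [huIcc]
          exact isCompact_Icc.image_of_continuousOn hcont
        exact hGc.continuousOn.integrableOn_compact hK
      · rw [huIcc]
        apply MeasureTheory.Integrable.mono hIccInt.norm
        · apply MeasureTheory.AEStronglyMeasurable.mul
          · exact (measurable_deriv φ).aestronglyMeasurable
          · exact ((hGc.comp_continuousOn hcont).aestronglyMeasurable measurableSet_Icc)
        · filter_upwards [MeasureTheory.ae_restrict_mem measurableSet_Icc] with x hx
          have hGval : G (φ x) = x ^ n := by
            rw [hG]
            simp only []
            rw [ginv x hx]
          rw [Function.comp_apply, smul_eq_mul, norm_mul, hGval, norm_norm]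
          have hxabs : |x ^ n| ≤ 1 := by
            rw [abs_pow]
            apply pow_le_one₀ (abs_nonneg x)
            rw [abs_le]
            exact ⟨by linarith [hx.1], hx.2⟩
          calc ‖deriv φ x‖ * ‖x ^ n‖ ≤ ‖deriv φ x‖ * 1 :=
                mul_le_mul_of_nonneg_left (by simpa [Real.norm_eq_abs] using hxabs)
                  (norm_nonneg _)
            _ = ‖deriv φ x‖ := mul_one _
    have hcongr : ∀ y ∈ Set.uIcc A (1:ℝ), y ^ n * deriv φ y = deriv φ y • G (φ y) := by
      intro y hy
      rw [huIcc] at hy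
      have hGval : G (φ y) = y ^ n := by
        rw [hG]; simp only []; rw [ginv y hy]
      rw [hGval, smul_eq_mul, mul_comm]
    rw [intervalIntegral.integral_congr hcongr, hcomp, hone, ← hx₀def,
      intervalIntegral.integral_symm]
  -- return probability formula
  have hret : ∀ n : ℕ, Real.pi * returnProb a n = ∫ x in (0:ℝ)..Real.pi, (RW1.g a x) ^ n :=
    fun n => (RW1.integral_g_pow_half hsummable hpos hsym n).symm
  -- the error expression
  have hE : ∀ n : ℕ, returnProb a n + (1 / Real.pi) * ∫ y in A..(1:ℝ), y ^ n * deriv φ y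
      = (1 / Real.pi) * ∫ x in x₀..Real.pi, (RW1.g a x) ^ n := by
    intro n
    have hadj : (∫ x in (0:ℝ)..x₀, (RW1.g a x) ^ n) + (∫ x in x₀..Real.pi, (RW1.g a x) ^ n)
        = ∫ x in (0:ℝ)..Real.pi, (RW1.g a x) ^ n :=
      intervalIntegral.integral_add_adjacent_intervals
        ((hgcont.pow n).intervalIntegrable _ _) ((hgcont.pow n).intervalIntegrable _ _)
    have hr := hret n
    rw [hsub n]
    field_simp
    nlinarith [hadj, hr]
  -- maximum of |g| on [x₀, π]
  obtain ⟨z, hzmem, hzmax⟩ := isCompact_Icc.exists_isMaxOn (Set.nonempty_Icc.mpr hx₀pi)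
      ((continuous_abs.comp hgcont).continuousOn :
        ContinuousOn (fun x => |RW1.g a x|) (Set.Icc x₀ Real.pi))
  set M : ℝ := |RW1.g a z| with hM
  have hM0 : 0 ≤ M := abs_nonneg _
  have hMlt : M < 1 := by
    have hz0 : 0 < z := lt_of_lt_of_le hx₀pos hzmem.1
    exact abs_lt.mpr ⟨RW1.neg_one_lt_g hsummable hpos h1 hprim heven hz0 hzmem.2,
      RW1.g_lt_one hsummable hpos h1 hprim hz0 hzmem.2⟩
  set r : ℝ := max M (1/2) with hr
  have hr0 : 0 < r := lt_of_lt_of_le (by norm_num) (le_max_right _ _)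
  have hr1 : r < 1 := max_lt hMlt (by norm_num)
  have hMr : M ≤ r := le_max_left _ _
  set μ : ℝ := -Real.log r / 2 with hμ
  have hlogr : Real.log r < 0 := Real.log_neg hr0 hr1
  have hμpos : 0 < μ := by rw [hμ]; linarith
  refine ⟨μ, hμpos, ?_⟩
  rw [isLittleO_iff]
  intro c hc
  have hexpμ : Real.exp (-μ) < 1 := Real.exp_lt_one_iff.mpr (by linarith)
  have hexpμ0 : (0:ℝ) ≤ Real.exp (-μ) := (Real.exp_pos _).le
  set C : ℝ := (Real.pi - x₀) / Real.pi with hC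
  have hC0 : 0 ≤ C := div_nonneg (by linarith) hpi.le
  have htendC : Filter.Tendsto (fun n : ℕ => C * (Real.exp (-μ)) ^ n)
      Filter.atTop (nhds 0) := by
    have h2 := (tendsto_pow_atTop_nhds_zero_of_lt_one hexpμ0 hexpμ).const_mul C
    simpa using h2
  have hev : ∀ᶠ n : ℕ in Filter.atTop, C * (Real.exp (-μ)) ^ n < c :=
    htendC.eventually_lt_const hc
  have hrexp : r = Real.exp (-μ) * Real.exp (-μ) := by
    rw [← Real.exp_add]
    have : -μ + -μ = Real.log r := by rw [hμ]; ring
    rw [this, Real.exp_log hr0]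
  filter_upwards [hev] with n hn
  rw [hE n]
  have hbnd : ‖∫ x in x₀..Real.pi, (RW1.g a x) ^ n‖ ≤ M ^ n * |Real.pi - x₀| := by
    apply intervalIntegral.norm_integral_le_of_norm_le_const
    intro x hx
    rw [Set.uIoc_of_le hx₀pi] at hx
    have hxmem : x ∈ Set.Icc x₀ Real.pi := ⟨hx.1.le, hx.2⟩
    have := hzmax hxmem
    rw [Real.norm_eq_abs, abs_pow]
    exact pow_le_pow_left₀ (abs_nonneg _) this n
  have step1 : ‖(1 / Real.pi) * ∫ x in x₀..Real.pi, (RW1.g a x) ^ n‖ ≤ C * M ^ n := by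
    rw [norm_mul, Real.norm_eq_abs (1 / Real.pi), abs_of_pos (by positivity)]
    calc (1 / Real.pi) * ‖∫ x in x₀..Real.pi, (RW1.g a x) ^ n‖
        ≤ (1 / Real.pi) * (M ^ n * |Real.pi - x₀|) :=
          mul_le_mul_of_nonneg_left hbnd (by positivity)
      _ = C * M ^ n := by
          rw [hC, abs_of_nonneg (by linarith : (0:ℝ) ≤ Real.pi - x₀)]
          field_simp
  have step2 : C * M ^ n ≤ C * r ^ n :=
    mul_le_mul_of_nonneg_left (pow_le_pow_left₀ hM0 hMr n) hC0
  have step3 : C * r ^ n ≤ c * (Real.exp (-μ)) ^ n := by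
    rw [hrexp, mul_pow, ← mul_assoc]
    exact mul_le_mul_of_nonneg_right hn.le (pow_nonneg hexpμ0 n)
  have hnorm_exp : ‖Real.exp (-μ * n)‖ = (Real.exp (-μ)) ^ n := by
    rw [Real.norm_eq_abs, abs_of_pos (Real.exp_pos _),
      show -μ * (n:ℝ) = (n:ℝ) * (-μ) by ring, Real.exp_nat_mul]
  rw [hnorm_exp]
  linarith [step1, step2, step3]
end

section
/- Let a be a symmetric, primitive random walk on ℤ all of whose step sizes are odd, with characteristic function f(x) = ∑_{k∈ℤ} a(k) e^{ikx} and return probabilities c_n. Suppose η ∈ (0,1) and φ : [1−η, 1] → [0, π/2] is continuous on [1−η, 1], continuously differentiable on (1−η, 1), satisfies φ(1) = 0 and f(φ(y)) = y for all y ∈ [1−η, 1]. Then there exists μ > 0 such that c_{2n} + (2/π) ∫_{1−η}^{1} y^{2n} φ'(y) dy = o(e^{−2μn}) as n → ∞. -/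
open Filter Asymptotics

open MeasureTheory Set

noncomputable def rwG (a : ℤ → ℝ) (x : ℝ) : ℝ := ∑' k : ℤ, a k * Real.cos (k * x)

lemma rw_summable {a : ℤ → ℝ} (ha : IsRandomWalk a) : Summable a := by
  by_contra h
  have h1 := ha.2.1
  rw [tsum_eq_zero_of_not_summable h] at h1
  norm_num at h1

lemma rwG_cos_summable {a : ℤ → ℝ} (ha : IsRandomWalk a) (x : ℝ) :
    Summable (fun k : ℤ => a k * Real.cos (k * x)) := by
  refine Summable.of_norm_bounded (rw_summable ha).abs (fun k => ?_)
  rw [Real.norm_eq_abs, abs_mul]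
  exact mul_le_of_le_one_right (abs_nonneg _) (Real.abs_cos_le_one _)

lemma rwG_sin_summable {a : ℤ → ℝ} (ha : IsRandomWalk a) (x : ℝ) :
    Summable (fun k : ℤ => a k * Real.sin (k * x)) := by
  refine Summable.of_norm_bounded (rw_summable ha).abs (fun k => ?_)
  rw [Real.norm_eq_abs, abs_mul]
  exact mul_le_of_le_one_right (abs_nonneg _) (Real.abs_sin_le_one _)

lemma charFun_eq {a : ℤ → ℝ} (ha : IsRandomWalk a) (hsym : ∀ n : ℤ, a n = a (-n)) (x : ℝ) :
    charFun a x = ((rwG a x : ℝ) : ℂ) := by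
  have hc := rwG_cos_summable ha x
  have hs := rwG_sin_summable ha x
  have hterm : ∀ k : ℤ, (a k : ℂ) * Complex.exp (Complex.I * k * x)
      = ((a k * Real.cos (k * x) : ℝ) : ℂ) + ((a k * Real.sin (k * x) : ℝ) : ℂ) * Complex.I := by
    intro k
    rw [show Complex.I * k * x = (((k : ℝ) * x : ℝ) : ℂ) * Complex.I by push_cast; ring,
      Complex.exp_mul_I, ← Complex.ofReal_cos, ← Complex.ofReal_sin]
    push_cast
    ring
  have hS : (∑' k : ℤ, a k * Real.sin (k * x)) = 0 := by
    have h1 := (Equiv.neg ℤ).tsum_eq (fun k : ℤ => a k * Real.sin (k * x))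
    simp only [Equiv.neg_apply] at h1
    have h2 : (∑' k : ℤ, a (-k) * Real.sin ((-k : ℤ) * x))
        = ∑' k : ℤ, -(a k * Real.sin (k * x)) := by
      refine tsum_congr fun k => ?_
      rw [← hsym k]
      push_cast
      rw [neg_mul, Real.sin_neg]
      ring
    rw [h2, tsum_neg] at h1
    linarith
  calc charFun a x
      = ∑' k : ℤ, (((a k * Real.cos (k * x) : ℝ) : ℂ)
          + ((a k * Real.sin (k * x) : ℝ) : ℂ) * Complex.I) := tsum_congr hterm
    _ = (∑' k : ℤ, ((a k * Real.cos (k * x) : ℝ) : ℂ))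
          + (∑' k : ℤ, ((a k * Real.sin (k * x) : ℝ) : ℂ)) * Complex.I := by
        rw [Summable.tsum_add (Complex.summable_ofReal.2 hc)
          ((Complex.summable_ofReal.2 hs).mul_right _), tsum_mul_right]
    _ = ((rwG a x : ℝ) : ℂ) := by
        rw [← Complex.ofReal_tsum, ← Complex.ofReal_tsum, hS]
        simp [rwG]

lemma rwG_continuous (ha : Summable a) : Continuous (rwG a) := by
  refine continuous_tsum (fun k => by fun_prop) ha.abs (fun k x => ?_)
  rw [Real.norm_eq_abs, abs_mul]
  exact mul_le_of_le_one_right (abs_nonneg _) (Real.abs_cos_le_one _)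

lemma rwG_zero (h1 : (∑' n : ℤ, a n) = 1) : rwG a 0 = 1 := by
  unfold rwG
  rw [← h1]
  exact tsum_congr fun k => by simp

lemma rwG_neg (x : ℝ) : rwG a (-x) = rwG a x :=
  tsum_congr fun k => by rw [mul_neg, Real.cos_neg]

lemma rwG_pi_sub (hodd : ∀ n : ℤ, a n ≠ 0 → Odd n) (x : ℝ) :
    rwG a (Real.pi - x) = -rwG a x := by
  unfold rwG
  rw [← tsum_neg]
  refine tsum_congr fun k => ?_
  by_cases hk : a k = 0
  · simp [hk]
  · obtain ⟨m, hm⟩ := hodd k hk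
    have : (k : ℝ) * (Real.pi - x) = (Real.pi - k * x) + (m : ℝ) * (2 * Real.pi) := by
      have : (k : ℝ) = 2 * m + 1 := by exact_mod_cast congrArg (Int.cast : ℤ → ℝ) hm
      rw [this]; ring
    rw [this, Real.cos_add_int_mul_two_pi, Real.cos_pi_sub]
    ring

/-- subgroup of multiples: {k | k * x ∈ c • ℤ} -/
def multSubgroup (x c : ℝ) : AddSubgroup ℤ where
  carrier := {k : ℤ | ∃ n : ℤ, (n : ℝ) * c = (k : ℝ) * x}
  zero_mem' := ⟨0, by simp⟩
  add_mem' := by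
    rintro k l ⟨n, hn⟩ ⟨m, hm⟩
    exact ⟨n + m, by push_cast; rw [add_mul, hn, hm, add_mul]⟩
  neg_mem' := by
    rintro k ⟨n, hn⟩
    exact ⟨-n, by push_cast; rw [neg_mul, hn, neg_mul]⟩

lemma mem_multSubgroup_one {x c : ℝ} {a : ℤ → ℝ}
    (hprim : AddSubgroup.closure {n : ℤ | a n ≠ 0} = ⊤)
    (hsupp : ∀ k : ℤ, a k ≠ 0 → ∃ n : ℤ, (n : ℝ) * c = (k : ℝ) * x) :
    ∃ n : ℤ, (n : ℝ) * c = x := by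
  have hle : AddSubgroup.closure {n : ℤ | a n ≠ 0} ≤ multSubgroup x c :=
    (AddSubgroup.closure_le _).2 fun k hk => hsupp k hk
  rw [hprim] at hle
  have h1 : (1 : ℤ) ∈ multSubgroup x c := hle trivial
  obtain ⟨n, hn⟩ := h1
  exact ⟨n, by simpa using hn⟩

lemma rwG_lt_one {a : ℤ → ℝ} (ha : IsRandomWalk a)
    (hprim : AddSubgroup.closure {n : ℤ | a n ≠ 0} = ⊤)
    {x : ℝ} (hx : 0 < x) (hx2 : x ≤ Real.pi / 2) : rwG a x < 1 := by
  have hpi := Real.pi_pos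
  obtain ⟨k₀, hk₀, hck₀⟩ : ∃ k, a k ≠ 0 ∧ Real.cos ((k : ℝ) * x) < 1 := by
    by_contra h
    push_neg at h
    have hsupp : ∀ k : ℤ, a k ≠ 0 → ∃ n : ℤ, (n : ℝ) * (2 * Real.pi) = (k : ℝ) * x := by
      intro k hk
      exact (Real.cos_eq_one_iff _).1 (le_antisymm (Real.cos_le_one _) (h k hk))
    obtain ⟨n, hn⟩ := mem_multSubgroup_one hprim hsupp
    rcases le_or_gt n 0 with hn0 | hn0
    · have : (n : ℝ) ≤ 0 := by exact_mod_cast hn0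
      nlinarith
    · have : (1 : ℝ) ≤ (n : ℝ) := by exact_mod_cast hn0
      nlinarith
  have h1 : rwG a x < ∑' k : ℤ, a k := by
    refine Summable.tsum_lt_tsum (i := k₀)
      (fun k => mul_le_of_le_one_right (ha.1 k) (Real.cos_le_one _)) ?_
      (rwG_cos_summable ha x) (rw_summable ha)
    have hpos : 0 < a k₀ := lt_of_le_of_ne (ha.1 k₀) (Ne.symm hk₀)
    nlinarith
  rwa [ha.2.1] at h1

lemma neg_one_lt_rwG {a : ℤ → ℝ} (ha : IsRandomWalk a)
    (hprim : AddSubgroup.closure {n : ℤ | a n ≠ 0} = ⊤)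
    {x : ℝ} (hx : 0 < x) (hx2 : x ≤ Real.pi / 2) : -1 < rwG a x := by
  have hpi := Real.pi_pos
  obtain ⟨k₀, hk₀, hck₀⟩ : ∃ k, a k ≠ 0 ∧ -1 < Real.cos ((k : ℝ) * x) := by
    by_contra h
    push_neg at h
    have hsupp : ∀ k : ℤ, a k ≠ 0 → ∃ n : ℤ, (n : ℝ) * Real.pi = (k : ℝ) * x := by
      intro k hk
      have := Real.cos_eq_neg_one_iff.1
        (le_antisymm (h k hk) (Real.neg_one_le_cos _))
      obtain ⟨m, hm⟩ := this
      exact ⟨2 * m + 1, by push_cast; linarith⟩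
    obtain ⟨n, hn⟩ := mem_multSubgroup_one hprim hsupp
    rcases le_or_gt n 0 with hn0 | hn0
    · have : (n : ℝ) ≤ 0 := by exact_mod_cast hn0
      nlinarith
    · have : (1 : ℝ) ≤ (n : ℝ) := by exact_mod_cast hn0
      nlinarith
  have h1 : (∑' k : ℤ, -(a k)) < rwG a x := by
    refine Summable.tsum_lt_tsum (i := k₀)
      (fun k => by nlinarith [ha.1 k, Real.neg_one_le_cos ((k : ℝ) * x)])
      ?_ ((rw_summable ha).neg) (rwG_cos_summable ha x)
    have hpos : 0 < a k₀ := lt_of_le_of_ne (ha.1 k₀) (Ne.symm hk₀)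
    nlinarith
  rw [tsum_neg, ha.2.1] at h1
  linarith

noncomputable def prodA (a : ℤ → ℝ) (n : ℕ) : (Fin n → ℤ) → ℝ := fun k => ∏ i, a (k i)

lemma prodA_nonneg {a : ℤ → ℝ} (ha : IsRandomWalk a) (n : ℕ) (k : Fin n → ℤ) :
    0 ≤ prodA a n k := Finset.prod_nonneg fun i _ => ha.1 _

lemma summable_prodA {a : ℤ → ℝ} (ha : IsRandomWalk a) (n : ℕ) :
    Summable (prodA a n) := by
  induction n with
  | zero => exact Summable.of_finite
  | succ n ih =>
      have h : Summable (fun p : ℤ × (Fin n → ℤ) => a p.1 * prodA a n p.2) :=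
        (rw_summable ha).mul_of_nonneg ih ha.1 (prodA_nonneg ha n)
      have := (Fin.consEquiv fun _ => ℤ).symm.summable_iff.2 h
      refine this.congr fun k => ?_
      show a (k 0) * prodA a n (fun i => k i.succ) = prodA a (n + 1) k
      rw [show prodA a (n + 1) k = ∏ i : Fin (n + 1), a (k i) from rfl,
        Fin.prod_univ_succ]
      rfl

lemma norm_exp_I_int (m : ℤ) (x : ℝ) : ‖Complex.exp (Complex.I * m * x)‖ = 1 := by
  rw [show Complex.I * m * x = (((m : ℝ) * x : ℝ) : ℂ) * Complex.I by push_cast; ring,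
    Complex.norm_exp_ofReal_mul_I]

lemma charFun_pow {a : ℤ → ℝ} (ha : IsRandomWalk a) (n : ℕ) (x : ℝ) :
    (charFun a x) ^ n
      = ∑' k : Fin n → ℤ, ((prodA a n k : ℝ) : ℂ)
          * Complex.exp (Complex.I * (∑ i, k i : ℤ) * x) := by
  induction n with
  | zero =>
      have : ∀ k : Fin 0 → ℤ, ((prodA a 0 k : ℝ) : ℂ)
          * Complex.exp (Complex.I * (∑ i, k i : ℤ) * x) = 1 := by
        intro k
        simp [prodA]
      simp only [pow_zero, this, tsum_const]
      simp
  | succ n ih =>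
      have hnorm1 : Summable fun k : ℤ => ‖(a k : ℂ) * Complex.exp (Complex.I * k * x)‖ := by
        refine ((rw_summable ha).abs).congr fun k => ?_
        rw [norm_mul, norm_exp_I_int, mul_one, Complex.norm_real, Real.norm_eq_abs]
      have hnorm2 : Summable fun k : Fin n → ℤ =>
          ‖((prodA a n k : ℝ) : ℂ) * Complex.exp (Complex.I * (∑ i, k i : ℤ) * x)‖ := by
        refine ((summable_prodA ha n).abs).congr fun k => ?_
        rw [norm_mul, norm_exp_I_int, mul_one, Complex.norm_real, Real.norm_eq_abs]
      rw [pow_succ, mul_comm, ih]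
      unfold _root_.charFun
      rw [tsum_mul_tsum_of_summable_norm hnorm1 hnorm2]
      rw [← (Fin.consEquiv fun _ => ℤ).symm.tsum_eq]
      have key : ∀ (s t : ℤ) (A B : ℝ),
          (A : ℂ) * Complex.exp (Complex.I * s * x)
            * ((B : ℂ) * Complex.exp (Complex.I * t * x))
          = ((A * B : ℝ) : ℂ) * Complex.exp (Complex.I * ((s + t : ℤ) : ℂ) * x) := by
        intro s t A B
        rw [show Complex.I * ((s + t : ℤ) : ℂ) * x
            = Complex.I * s * x + Complex.I * t * x by push_cast; ring, Complex.exp_add]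
        push_cast
        ring
      refine tsum_congr fun k => ?_
      simp only [Fin.consEquiv_symm_apply, Fin.tail, prodA, Fin.prod_univ_succ, Fin.sum_univ_succ]
      exact key _ _ _ _

lemma integral_exp_I_int (m : ℤ) :
    (∫ x in (-Real.pi)..Real.pi, Complex.exp (Complex.I * m * x))
      = if m = 0 then (2 * Real.pi : ℝ) else 0 := by
  by_cases hm : m = 0
  · simp only [hm, Int.cast_zero, mul_zero, zero_mul, Complex.exp_zero]
    rw [intervalIntegral.integral_const]
    simp [hm]
    push_cast
    ring
  · have hc : (Complex.I * m) ≠ 0 := by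
      simp [Complex.I_ne_zero, Complex.ext_iff]
      exact_mod_cast hm
    have : (∫ x in (-Real.pi)..Real.pi, Complex.exp (Complex.I * m * x))
        = ∫ x in (-Real.pi)..Real.pi, Complex.exp ((Complex.I * m) * (x : ℝ)) := by
      rfl
    rw [this, integral_exp_mul_complex hc]
    have hper : Complex.exp (Complex.I * m * (Real.pi : ℝ))
        = Complex.exp (Complex.I * m * ((-Real.pi : ℝ) : ℂ)) := by
      rw [show Complex.I * m * ((Real.pi : ℝ) : ℂ)
          = Complex.I * m * ((-Real.pi : ℝ) : ℂ) + (m : ℂ) * (2 * (Real.pi : ℝ) * Complex.I) by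
        push_cast; ring, Complex.exp_add, Complex.exp_int_mul_two_pi_mul_I, mul_one]
    rw [hper]
    simp [hm]

lemma integral_charFun_pow {a : ℤ → ℝ} (ha : IsRandomWalk a) (n : ℕ) :
    (∫ x in (-Real.pi)..Real.pi, (charFun a x) ^ n)
      = ((2 * Real.pi * returnProb a n : ℝ) : ℂ) := by
  have hpi := Real.pi_pos
  have hle : (-Real.pi : ℝ) ≤ Real.pi := by linarith
  have hnn : Summable fun k : Fin n → ℤ => ‖prodA a n k‖₊ := by
    rw [← NNReal.summable_coe]
    simpa [coe_nnnorm] using summable_norm_iff.2 (summable_prodA ha n)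
  rw [intervalIntegral.integral_of_le hle]
  simp only [charFun_pow ha]
  rw [MeasureTheory.integral_tsum ?meas ?fin]
  case meas =>
    intro k
    exact Continuous.aestronglyMeasurable (by fun_prop)
  case fin =>
    have hnorm : ∀ (k : Fin n → ℤ) (x : ℝ),
        ‖((prodA a n k : ℝ) : ℂ) * Complex.exp (Complex.I * (∑ i, k i : ℤ) * x)‖₊
          = ‖prodA a n k‖₊ := by
      intro k x
      ext1
      rw [coe_nnnorm, coe_nnnorm, norm_mul, norm_exp_I_int, mul_one, Complex.norm_real]
    have : ∀ k : Fin n → ℤ,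
        (∫⁻ x in Ioc (-Real.pi) Real.pi,
          ‖((prodA a n k : ℝ) : ℂ) * Complex.exp (Complex.I * (∑ i, k i : ℤ) * x)‖₊)
        = (‖prodA a n k‖₊ : ENNReal) * ENNReal.ofReal (Real.pi - -Real.pi) := by
      intro k
      simp only [hnorm]
      rw [MeasureTheory.lintegral_const, Measure.restrict_apply_univ, Real.volume_Ioc]
    simp only [enorm_eq_nnnorm]
    rw [tsum_congr this, ENNReal.tsum_mul_right]
    exact ENNReal.mul_ne_top (ENNReal.tsum_coe_ne_top_iff_summable.2 hnn)
      ENNReal.ofReal_ne_top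
  have hterm : ∀ k : Fin n → ℤ,
      (∫ x in Ioc (-Real.pi) Real.pi,
        ((prodA a n k : ℝ) : ℂ) * Complex.exp (Complex.I * (∑ i, k i : ℤ) * x))
      = ((2 * Real.pi : ℝ) : ℂ)
          * ((if (∑ i, k i) = 0 then prodA a n k else 0 : ℝ) : ℂ) := by
    intro k
    rw [integral_const_mul, ← intervalIntegral.integral_of_le hle,
      integral_exp_I_int]
    split_ifs <;> push_cast <;> ring
  rw [tsum_congr hterm, tsum_mul_left, ← Complex.ofReal_tsum]
  rw [show returnProb a n = ∑' k : Fin n → ℤ, (if (∑ i, k i) = 0 then prodA a n k else 0) from rfl]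
  push_cast
  ring

lemma returnProb_eq_integral {a : ℤ → ℝ} (ha : IsRandomWalk a)
    (hsym : ∀ n : ℤ, a n = a (-n)) (n : ℕ) :
    2 * Real.pi * returnProb a n = ∫ x in (-Real.pi)..Real.pi, (rwG a x) ^ n := by
  have h := integral_charFun_pow ha n
  have h2 : (∫ x in (-Real.pi)..Real.pi, (charFun a x) ^ n)
      = ((∫ x in (-Real.pi)..Real.pi, (rwG a x) ^ n : ℝ) : ℂ) := by
    rw [← intervalIntegral.integral_ofReal]
    apply intervalIntegral.integral_congr
    intro x _
    show charFun a x ^ n = ((rwG a x ^ n : ℝ) : ℂ)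
    rw [charFun_eq ha hsym]
    push_cast
    ring
  rw [h2] at h
  exact_mod_cast h.symm

/-- the 2n-th return probability as an integral over [0, π/2] -/
lemma returnProb_eq_integral_quarter {a : ℤ → ℝ} (ha : IsRandomWalk a)
    (hsym : ∀ n : ℤ, a n = a (-n)) (hodd : ∀ n : ℤ, a n ≠ 0 → Odd n) (n : ℕ) :
    returnProb a (2 * n) = (2 / Real.pi) * ∫ x in (0:ℝ)..(Real.pi/2), (rwG a x) ^ (2 * n) := by
  have hpi := Real.pi_pos
  have hG := rwG_continuous (rw_summable ha)
  have hInt : ∀ c d : ℝ, IntervalIntegrable (fun x => (rwG a x) ^ (2 * n)) volume c d :=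
    fun c d => ((hG.pow _).intervalIntegrable c d)
  have hneg : (∫ x in (-Real.pi)..(0:ℝ), (rwG a x) ^ (2 * n))
      = ∫ x in (0:ℝ)..Real.pi, (rwG a x) ^ (2 * n) := by
    have := intervalIntegral.integral_comp_neg (a := (0:ℝ)) (b := Real.pi)
      (fun x => (rwG a x) ^ (2 * n))
    rw [neg_zero] at this
    rw [← this]
    apply intervalIntegral.integral_congr
    intro x _
    show rwG a (-x) ^ (2 * n) = rwG a x ^ (2 * n)
    rw [rwG_neg]
  have hsub : (∫ x in (Real.pi/2)..Real.pi, (rwG a x) ^ (2 * n))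
      = ∫ x in (0:ℝ)..(Real.pi/2), (rwG a x) ^ (2 * n) := by
    have := intervalIntegral.integral_comp_sub_left (a := (0:ℝ)) (b := Real.pi/2)
      (fun x => (rwG a x) ^ (2 * n)) Real.pi
    rw [sub_zero, show Real.pi - Real.pi/2 = Real.pi/2 by ring] at this
    rw [← this]
    apply intervalIntegral.integral_congr
    intro x _
    show rwG a (Real.pi - x) ^ (2 * n) = rwG a x ^ (2 * n)
    rw [rwG_pi_sub hodd]
    rw [neg_pow, pow_mul, pow_mul]
    simp [neg_one_sq]
  have hsplit1 : (∫ x in (-Real.pi)..Real.pi, (rwG a x) ^ (2 * n))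
      = (∫ x in (-Real.pi)..(0:ℝ), (rwG a x) ^ (2 * n))
        + ∫ x in (0:ℝ)..Real.pi, (rwG a x) ^ (2 * n) :=
    (intervalIntegral.integral_add_adjacent_intervals (hInt _ _) (hInt _ _)).symm
  have hsplit2 : (∫ x in (0:ℝ)..Real.pi, (rwG a x) ^ (2 * n))
      = (∫ x in (0:ℝ)..(Real.pi/2), (rwG a x) ^ (2 * n))
        + ∫ x in (Real.pi/2)..Real.pi, (rwG a x) ^ (2 * n) :=
    (intervalIntegral.integral_add_adjacent_intervals (hInt _ _) (hInt _ _)).symm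
  have key := returnProb_eq_integral ha hsym (2 * n)
  rw [hsplit1, hneg, hsplit2, hsub] at key
  field_simp at key ⊢
  linarith

/-- Type 2 estimate: for a symmetric, primitive random walk with all step sizes odd,
`c_(2n) + (2/π) ∫_(1-η)^1 y^(2n) φ'(y) dy = o(e^(-2μn))` for some `μ > 0`, where `φ`
is a local inverse of the characteristic function. -/
theorem returnProb_integral_estimate_type2 (a : ℤ → ℝ) (ha : IsRandomWalk a)
    (hsym : ∀ n : ℤ, a n = a (-n))
    (hprim : AddSubgroup.closure {n : ℤ | a n ≠ 0} = ⊤)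
    (hodd : ∀ n : ℤ, a n ≠ 0 → Odd n)
    (η : ℝ) (hη : η ∈ Set.Ioo (0 : ℝ) 1) (φ : ℝ → ℝ)
    (hmaps : ∀ y ∈ Set.Icc (1 - η) 1, φ y ∈ Set.Icc 0 (Real.pi / 2))
    (hcont : ContinuousOn φ (Set.Icc (1 - η) 1))
    (hdiff : ∀ y ∈ Set.Ioo (1 - η) 1, DifferentiableAt ℝ φ y)
    (hderiv_cont : ContinuousOn (deriv φ) (Set.Ioo (1 - η) 1))
    (hone : φ 1 = 0)
    (hinv : ∀ y ∈ Set.Icc (1 - η) 1, charFun a (φ y) = (y : ℂ)) :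
    ∃ μ : ℝ, 0 < μ ∧
      (fun n : ℕ =>
          returnProb a (2 * n) + (2 / Real.pi) * ∫ y in (1 - η)..1, y ^ (2 * n) * deriv φ y)
        =o[Filter.atTop] fun n : ℕ => Real.exp (-(2 * μ) * n) := by
  have hpi := Real.pi_pos
  have hG := rwG_continuous (rw_summable ha)
  have hle : (1 - η : ℝ) ≤ 1 := by linarith [hη.1]
  -- G ∘ φ = id on Icc
  have hinvG : ∀ y ∈ Icc (1 - η) 1, rwG a (φ y) = y := by
    intro y hy
    have := hinv y hy
    rw [charFun_eq ha hsym] at this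
    exact_mod_cast this
  have hmem : (1 - η : ℝ) ∈ Icc (1 - η) 1 := ⟨le_refl _, hle⟩
  set c := φ (1 - η) with hc
  have hc_mem := hmaps _ hmem
  have hc_le : c ≤ Real.pi / 2 := hc_mem.2
  have hc_pos : 0 < c := by
    rcases hc_mem.1.lt_or_eq with h | h
    · exact h
    · exfalso
      have h1 : rwG a c = 1 - η := hinvG _ hmem
      rw [hc, ← h, rwG_zero ha.2.1] at h1
      linarith [hη.1]
  -- φ is injective, hence strictly antitone
  have hinj : InjOn φ (Icc (1 - η) 1) := by
    intro y hy z hz h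
    rw [← hinvG y hy, ← hinvG z hz, h]
  have hanti : StrictAntiOn φ (Icc (1 - η) 1) := by
    refine ContinuousOn.strictAntiOn_of_injOn_Icc hle ?_ hcont hinj
    rw [hone]
    exact hc_mem.1
  have hderiv_nonpos : ∀ x ∈ Ioo (1 - η) 1, deriv φ x ≤ 0 := by
    intro x hx
    have hd : HasDerivAt φ (deriv φ x) x := (hdiff x hx).hasDerivAt
    rw [hasDerivAt_iff_tendsto_slope] at hd
    have h2 : Tendsto (slope φ x) (nhdsWithin x (Ioi x)) (nhds (deriv φ x)) :=
      hd.mono_left (nhdsWithin_mono x fun y hy => ne_of_gt hy)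
    refine le_of_tendsto h2 ?_
    filter_upwards [Ioo_mem_nhdsGT_of_mem (⟨le_refl x, hx.2⟩ : x ∈ Ico x 1)] with y hy
    have hxI : x ∈ Icc (1 - η) 1 := ⟨hx.1.le, hx.2.le⟩
    have hyI : y ∈ Icc (1 - η) 1 := ⟨by linarith [hx.1, hy.1], hy.2.le⟩
    have hlt := hanti hxI hyI hy.1
    rw [slope_def_field]
    apply div_nonpos_of_nonpos_of_nonneg <;> linarith [hy.1]
  -- integrability of deriv φ
  have hder_int : IntegrableOn (deriv φ) (Icc (1 - η) 1) volume := by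
    rw [integrableOn_Icc_iff_integrableOn_Ioc]
    have h1 : IntegrableOn (fun x => -deriv φ x) (Ioc (1 - η) 1) volume := by
      refine intervalIntegral.integrableOn_deriv_of_nonneg hcont.neg ?_ ?_
      · exact fun x hx => ((hdiff x hx).hasDerivAt).neg
      · exact fun x hx => neg_nonneg.2 (hderiv_nonpos x hx)
    have h2 : IntegrableOn (fun x => -(-deriv φ x)) (Ioc (1 - η) 1) volume := h1.neg
    simpa using h2
  -- substitution
  have huIcc : uIcc (1 - η) 1 = Icc (1 - η) 1 := uIcc_of_le hle
  have hsubst : ∀ n : ℕ,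
      (∫ y in (1 - η)..1, y ^ (2 * n) * deriv φ y)
        = -∫ x in (0:ℝ)..c, (rwG a x) ^ (2 * n) := by
    intro n
    have hGp : Continuous (fun x => (rwG a x) ^ (2 * n)) := hG.pow _
    have hg2 : IntegrableOn
        (fun y => deriv φ y • ((fun x => (rwG a x) ^ (2 * n)) ∘ φ) y)
        (uIcc (1 - η) 1) volume := by
      rw [huIcc]
      have hmeas : AEStronglyMeasurable (fun y => ((fun x => (rwG a x) ^ (2 * n)) ∘ φ) y)
          (volume.restrict (Icc (1 - η) 1)) :=
        (hGp.comp_continuousOn hcont).aestronglyMeasurable measurableSet_Icc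
      have hbd : ∀ᵐ y ∂(volume.restrict (Icc (1 - η) 1)),
          ‖((fun x => (rwG a x) ^ (2 * n)) ∘ φ) y‖ ≤ 1 := by
        rw [ae_restrict_iff' measurableSet_Icc]
        refine Eventually.of_forall fun y hy => ?_
        have h1 : rwG a (φ y) = y := hinvG y hy
        show ‖(rwG a (φ y)) ^ (2 * n)‖ ≤ 1
        rw [h1, norm_pow, Real.norm_eq_abs]
        refine pow_le_one₀ (abs_nonneg _) ?_
        rw [abs_le]
        constructor <;> [linarith [hy.1, hη.2.le]; exact hy.2]
      have := Integrable.bdd_mul (c := 1) hder_int hmeas hbd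
      exact this.congr (Eventually.of_forall fun y => by simp [mul_comm])
    have hkey := intervalIntegral.integral_comp_smul_deriv''' (f := φ) (f' := deriv φ)
      (g := fun x => (rwG a x) ^ (2 * n)) (a := 1 - η) (b := 1)
      (by rwa [huIcc]) ?hff' ?hgc ?hg1 hg2
    case hff' =>
      rw [min_eq_left hle, max_eq_right hle]
      exact fun x hx => ((hdiff x hx).hasDerivAt).hasDerivWithinAt
    case hgc => exact hGp.continuousOn
    case hg1 =>
      refine ContinuousOn.integrableOn_compact ?_ hGp.continuousOn
      rw [huIcc]
      exact isCompact_Icc.image_of_continuousOn hcont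
    have hL : (∫ y in (1 - η)..1, y ^ (2 * n) * deriv φ y)
        = ∫ y in (1 - η)..1, deriv φ y • ((fun x => (rwG a x) ^ (2 * n)) ∘ φ) y := by
      refine intervalIntegral.integral_congr fun y hy => ?_
      rw [huIcc] at hy
      show y ^ (2 * n) * deriv φ y = deriv φ y * (rwG a (φ y)) ^ (2 * n)
      rw [hinvG y hy, mul_comm]
    rw [hL, hkey, hone, intervalIntegral.integral_symm]
  -- main identity
  have hEq : ∀ n : ℕ,
      returnProb a (2 * n) + (2 / Real.pi) * ∫ y in (1 - η)..1, y ^ (2 * n) * deriv φ y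
        = (2 / Real.pi) * ∫ x in c..(Real.pi / 2), (rwG a x) ^ (2 * n) := by
    intro n
    rw [returnProb_eq_integral_quarter ha hsym hodd n, hsubst n]
    have hsplit : (∫ x in (0:ℝ)..(Real.pi / 2), (rwG a x) ^ (2 * n))
        = (∫ x in (0:ℝ)..c, (rwG a x) ^ (2 * n))
          + ∫ x in c..(Real.pi / 2), (rwG a x) ^ (2 * n) :=
      (intervalIntegral.integral_add_adjacent_intervals
        ((hG.pow _).intervalIntegrable _ _) ((hG.pow _).intervalIntegrable _ _)).symm
    rw [hsplit]
    ring
  -- bound on the remaining integral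
  obtain ⟨x₀, hx₀mem, hx₀max⟩ :=
    IsCompact.exists_isMaxOn isCompact_Icc (nonempty_Icc.2 hc_le)
      ((continuous_abs.comp hG).continuousOn :
        ContinuousOn (fun x => |rwG a x|) (Icc c (Real.pi / 2)))
  set M := |rwG a x₀| with hMdef
  have hM0 : 0 ≤ M := abs_nonneg _
  have hM1 : M < 1 := by
    rw [hMdef, abs_lt]
    have hx₀pos : 0 < x₀ := lt_of_lt_of_le hc_pos hx₀mem.1
    exact ⟨neg_one_lt_rwG ha hprim hx₀pos hx₀mem.2, rwG_lt_one ha hprim hx₀pos hx₀mem.2⟩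
  set M₁ := max M (Real.exp (-1)) with hM₁def
  have hM₁pos : 0 < M₁ := lt_of_lt_of_le (Real.exp_pos _) (le_max_right _ _)
  have hM₁lt : M₁ < 1 := max_lt hM1 (Real.exp_lt_one_iff.2 (by norm_num))
  set μ := -Real.log M₁ / 2 with hμdef
  have hlog : Real.log M₁ = -(2 * μ) := by rw [hμdef]; ring
  have hμpos : 0 < μ := by
    have := Real.log_neg hM₁pos hM₁lt
    rw [hμdef]
    linarith
  refine ⟨μ, hμpos, ?_⟩
  have hM₁exp : ∀ n : ℕ, M₁ ^ (2 * n) = Real.exp (-(4 * μ) * n) := by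
    intro n
    rw [← Real.exp_log hM₁pos, ← Real.exp_nat_mul, hlog]
    congr 1
    push_cast
    ring
  have hbound : ∀ n : ℕ,
      ‖returnProb a (2 * n) + (2 / Real.pi) * ∫ y in (1 - η)..1, y ^ (2 * n) * deriv φ y‖
        ≤ ((2 / Real.pi) * (Real.pi / 2 - c)) * M₁ ^ (2 * n) := by
    intro n
    rw [hEq n]
    have h1 : ‖∫ x in c..(Real.pi / 2), (rwG a x) ^ (2 * n)‖
        ≤ M₁ ^ (2 * n) * |Real.pi / 2 - c| := by
      refine intervalIntegral.norm_integral_le_of_norm_le_const fun x hx => ?_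
      rw [uIoc_of_le hc_le] at hx
      rw [norm_pow, Real.norm_eq_abs]
      calc |rwG a x| ^ (2 * n) ≤ M ^ (2 * n) :=
            pow_le_pow_left₀ (abs_nonneg _) (hx₀max (show x ∈ Icc c (Real.pi / 2) from ⟨hx.1.le, hx.2⟩)) _
        _ ≤ M₁ ^ (2 * n) := pow_le_pow_left₀ hM0 (le_max_left _ _) _
    rw [norm_mul, Real.norm_eq_abs (2 / Real.pi), abs_of_pos (by positivity)]
    rw [abs_of_nonneg (by linarith : (0:ℝ) ≤ Real.pi / 2 - c)] at h1
    calc (2 / Real.pi) * ‖∫ x in c..(Real.pi / 2), (rwG a x) ^ (2 * n)‖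
        ≤ (2 / Real.pi) * (M₁ ^ (2 * n) * (Real.pi / 2 - c)) :=
          mul_le_mul_of_nonneg_left h1 (by positivity)
      _ = ((2 / Real.pi) * (Real.pi / 2 - c)) * M₁ ^ (2 * n) := by ring
  have hO : (fun n : ℕ =>
      returnProb a (2 * n) + (2 / Real.pi) * ∫ y in (1 - η)..1, y ^ (2 * n) * deriv φ y)
      =O[atTop] fun n : ℕ => Real.exp (-(4 * μ) * n) := by
    rw [isBigO_iff]
    refine ⟨(2 / Real.pi) * (Real.pi / 2 - c), Eventually.of_forall fun n => ?_⟩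
    rw [Real.norm_eq_abs (Real.exp _), abs_of_pos (Real.exp_pos _), ← hM₁exp n]
    exact hbound n
  have ho : (fun n : ℕ => Real.exp (-(4 * μ) * n))
      =o[atTop] fun n : ℕ => Real.exp (-(2 * μ) * n) := by
    rw [isLittleO_iff_tendsto fun n h => absurd h (Real.exp_ne_zero _)]
    have hfun : (fun n : ℕ => Real.exp (-(4 * μ) * n) / Real.exp (-(2 * μ) * n))
        = fun n : ℕ => Real.exp (-(2 * μ) * n) := by
      funext n
      rw [← Real.exp_sub]
      congr 1
      ring
    rw [hfun]
    refine Real.tendsto_exp_atBot.comp ?_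
    exact (tendsto_const_mul_atBot_of_neg (by linarith)).2 tendsto_natCast_atTop_atTop
  exact hO.trans_isLittleO ho
end

section
/- Let a be a symmetric random walk on ℤ with return probabilities c_n. Then limsup_{n→∞} (c_{2n})^{1/(2n)} = 1. -/
open Filter Asymptotics

open Topology


namespace RWaux

variable {a : ℤ → ℝ}

noncomputable def b (a : ℤ → ℝ) (n : ℕ) (k : ℤ) : ℝ :=
  ∑' v : Fin n → ℤ, if (∑ i, v i) = k then ∏ i, a (v i) else 0

lemma g_nonneg (h0 : ∀ n, 0 ≤ a n) {n : ℕ} (v : Fin n → ℤ) : 0 ≤ ∏ i, a (v i) :=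
  Finset.prod_nonneg fun i _ => h0 _

lemma summable_norm_a (h0 : ∀ n, 0 ≤ a n) (hs : Summable a) :
    Summable (fun k => ‖a k‖) := by
  simpa [Real.norm_eq_abs, abs_of_nonneg (h0 _)] using hs

lemma g_summable (h0 : ∀ n, 0 ≤ a n) (hs : Summable a) (n : ℕ) :
    Summable (fun v : Fin n → ℤ => ∏ i, a (v i)) := by
  induction n with
  | zero => exact Summable.of_finite
  | succ n ih =>
    have h2 : Summable (fun p : ℤ × (Fin n → ℤ) => a p.1 * ∏ i, a (p.2 i)) :=
      Summable.mul_of_nonneg (f := a) (g := fun v : Fin n → ℤ => ∏ i, a (v i)) hs ih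
        h0 (fun v => g_nonneg h0 v)
    have h3 := ((Fin.consEquiv (fun _ : Fin (n+1) => ℤ)).symm.summable_iff
      (f := fun p : ℤ × (Fin n → ℤ) => a p.1 * ∏ i, a (p.2 i))).2 h2
    refine h3.congr fun v => ?_
    show a (((Fin.consEquiv (fun _ : Fin (n+1) => ℤ)).symm v).1) * ∏ i, a (((Fin.consEquiv (fun _ : Fin (n+1) => ℤ)).symm v).2 i) = _
    rw [Fin.prod_univ_succ]
    rfl

lemma g_tsum (h0 : ∀ n, 0 ≤ a n) (hs : Summable a) (ht : ∑' k, a k = 1) (n : ℕ) :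
    ∑' v : Fin n → ℤ, ∏ i, a (v i) = 1 := by
  induction n with
  | zero =>
    rw [tsum_eq_single (fun i => (0:ℤ)) (fun v hv => absurd (Subsingleton.elim v _) hv)]
    simp
  | succ n ih =>
    have hn1 : Summable (fun v : Fin n → ℤ => ‖∏ i, a (v i)‖) := by
      simpa only [Real.norm_eq_abs] using (g_summable h0 hs n).abs
    have h2 : (∑' k, a k) * (∑' v : Fin n → ℤ, ∏ i, a (v i))
        = ∑' p : ℤ × (Fin n → ℤ), a p.1 * ∏ i, a (p.2 i) :=
      tsum_mul_tsum_of_summable_norm (summable_norm_a h0 hs) hn1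
    have h3 := (Fin.consEquiv (fun _ : Fin (n+1) => ℤ)).symm.tsum_eq
      (f := fun p : ℤ × (Fin n → ℤ) => a p.1 * ∏ i, a (p.2 i))
    calc ∑' v : Fin (n+1) → ℤ, ∏ i, a (v i)
        = ∑' v : Fin (n+1) → ℤ,
            a (((Fin.consEquiv (fun _ : Fin (n+1) => ℤ)).symm v).1) * ∏ i, a (((Fin.consEquiv (fun _ : Fin (n+1) => ℤ)).symm v).2 i) := by
          refine tsum_congr fun v => ?_
          rw [Fin.prod_univ_succ]
          rfl
      _ = ∑' p : ℤ × (Fin n → ℤ), a p.1 * ∏ i, a (p.2 i) := h3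
      _ = 1 := by rw [← h2, ht, ih, one_mul]


lemma bsummand_nonneg (h0 : ∀ n, 0 ≤ a n) (n : ℕ) (k : ℤ) (v : Fin n → ℤ) :
    0 ≤ if (∑ i, v i) = k then ∏ i, a (v i) else 0 := by
  split_ifs
  · exact g_nonneg h0 v
  · exact le_rfl

lemma bsummand_summable (h0 : ∀ n, 0 ≤ a n) (hs : Summable a) (n : ℕ) (k : ℤ) :
    Summable (fun v : Fin n → ℤ => if (∑ i, v i) = k then ∏ i, a (v i) else 0) := by
  refine Summable.of_nonneg_of_le (bsummand_nonneg h0 n k) (fun v => ?_) (g_summable h0 hs n)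
  split_ifs
  · exact le_rfl
  · exact g_nonneg h0 v

lemma b_nonneg (h0 : ∀ n, 0 ≤ a n) (n : ℕ) (k : ℤ) : 0 ≤ b a n k :=
  tsum_nonneg (bsummand_nonneg h0 n k)

lemma b_le_one (h0 : ∀ n, 0 ≤ a n) (hs : Summable a) (ht : ∑' k, a k = 1) (n : ℕ) (k : ℤ) :
    b a n k ≤ 1 := by
  refine le_trans (Summable.tsum_le_tsum (fun v => ?_) (bsummand_summable h0 hs n k)
    (g_summable h0 hs n)) (le_of_eq (g_tsum h0 hs ht n))
  split_ifs
  · exact le_rfl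
  · exact g_nonneg h0 v

lemma b_neg (hsym : ∀ n : ℤ, a n = a (-n)) (n : ℕ) (k : ℤ) : b a n (-k) = b a n k := by
  have h := (Equiv.neg (Fin n → ℤ)).tsum_eq
    (f := fun v : Fin n → ℤ => if (∑ i, v i) = -k then ∏ i, a (v i) else 0)
  rw [b, ← h]
  refine tsum_congr fun v => ?_
  have h1 : (∑ i, (Equiv.neg (Fin n → ℤ) v) i) = -∑ i, v i := by
    simp [Equiv.neg, Finset.sum_neg_distrib]
  have h2 : (∏ i, a ((Equiv.neg (Fin n → ℤ) v) i)) = ∏ i, a (v i) := by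
    refine Finset.prod_congr rfl fun i _ => ?_
    show a (-(v i)) = a (v i)
    exact (hsym (v i)).symm
  rw [h1, h2]
  simp only [neg_inj]


noncomputable def pe (m n : ℕ) : ((Fin m → ℤ) × (Fin n → ℤ)) ≃ (Fin (m + n) → ℤ) :=
  (Equiv.sumArrowEquivProdArrow (Fin m) (Fin n) ℤ).symm.trans
    (Equiv.arrowCongr finSumFinEquiv (Equiv.refl ℤ))

lemma pe_apply (m n : ℕ) (p : (Fin m → ℤ) × (Fin n → ℤ)) (i : Fin (m + n)) :
    pe m n p i = Sum.elim p.1 p.2 (finSumFinEquiv.symm i) := rfl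

lemma pe_sum (m n : ℕ) (p : (Fin m → ℤ) × (Fin n → ℤ)) :
    (∑ i, pe m n p i) = (∑ i, p.1 i) + (∑ i, p.2 i) := by
  have := Equiv.sum_comp (finSumFinEquiv (m := m) (n := n)).symm (Sum.elim p.1 p.2)
  calc (∑ i, pe m n p i) = ∑ j : Fin m ⊕ Fin n, Sum.elim p.1 p.2 j := this
    _ = (∑ i, p.1 i) + (∑ i, p.2 i) := by rw [Fintype.sum_sum_type]; simp

lemma pe_prod (m n : ℕ) (p : (Fin m → ℤ) × (Fin n → ℤ)) :
    (∏ i, a (pe m n p i)) = (∏ i, a (p.1 i)) * (∏ i, a (p.2 i)) := by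
  have := Equiv.prod_comp (finSumFinEquiv (m := m) (n := n)).symm
    (fun j => a (Sum.elim p.1 p.2 j))
  calc (∏ i, a (pe m n p i)) = ∏ j : Fin m ⊕ Fin n, a (Sum.elim p.1 p.2 j) := this
    _ = (∏ i, a (p.1 i)) * (∏ i, a (p.2 i)) := by rw [Fintype.prod_sum_type]; simp

lemma b_mul_le (h0 : ∀ n, 0 ≤ a n) (hs : Summable a) (m n : ℕ) (k k' : ℤ) :
    b a m k * b a n k' ≤ b a (m + n) (k + k') := by
  set F : (Fin m → ℤ) × (Fin n → ℤ) → ℝ := fun p =>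
    (if (∑ i, p.1 i) = k then ∏ i, a (p.1 i) else 0) *
    (if (∑ i, p.2 i) = k' then ∏ i, a (p.2 i) else 0) with hF
  set G : (Fin (m + n) → ℤ) → ℝ := fun u =>
    if (∑ i, u i) = k + k' then ∏ i, a (u i) else 0 with hG
  have hFsummable : Summable F :=
    Summable.mul_of_nonneg (f := fun v : Fin m → ℤ => if (∑ i, v i) = k then ∏ i, a (v i) else 0)
      (g := fun w : Fin n → ℤ => if (∑ i, w i) = k' then ∏ i, a (w i) else 0)
      (bsummand_summable h0 hs m k) (bsummand_summable h0 hs n k')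
      (bsummand_nonneg h0 m k) (bsummand_nonneg h0 n k')
  have hGsummable : Summable G := bsummand_summable h0 hs (m + n) (k + k')
  have hGe : Summable (fun p => G (pe m n p)) := ((pe m n).summable_iff (f := G)).2 hGsummable
  have h1 : b a m k * b a n k' = ∑' p, F p := by
    calc b a m k * b a n k'
        = ∑' v : Fin m → ℤ, (if (∑ i, v i) = k then ∏ i, a (v i) else 0) * b a n k' :=
          (tsum_mul_right).symm
      _ = ∑' v : Fin m → ℤ, ∑' w : Fin n → ℤ, F (v, w) :=
          tsum_congr fun v => (tsum_mul_left).symm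
      _ = ∑' p, F p := (Summable.tsum_prod hFsummable).symm
  have h2 : ∀ p, F p ≤ G (pe m n p) := by
    intro p
    rw [hF, hG]
    simp only [pe_sum, pe_prod]
    by_cases h1 : (∑ i, p.1 i) = k
    · by_cases h2 : (∑ i, p.2 i) = k'
      · rw [if_pos h1, if_pos h2, if_pos (by rw [h1, h2])]
      · rw [if_neg h2, mul_zero]
        split_ifs
        · exact mul_nonneg (g_nonneg h0 _) (g_nonneg h0 _)
        · exact le_rfl
    · rw [if_neg h1, zero_mul]
      split_ifs
      · exact mul_nonneg (g_nonneg h0 _) (g_nonneg h0 _)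
      · exact le_rfl
  calc b a m k * b a n k' = ∑' p, F p := h1
    _ ≤ ∑' p, G (pe m n p) := Summable.tsum_le_tsum h2 hFsummable hGe
    _ = ∑' u, G u := (pe m n).tsum_eq G
    _ = b a (m + n) (k + k') := rfl


lemma mass_le (h0 : ∀ n, 0 ≤ a n) (hs : Summable a) (N : ℕ) (n : ℕ) :
    (∑ k ∈ Finset.Icc (-(N:ℤ)) N, a k) ^ n
      ≤ ∑ k ∈ Finset.Icc (-((N:ℤ)*n)) ((N:ℤ)*n), b a n k := by
  classical
  set S : Finset ℤ := Finset.Icc (-(N:ℤ)) N with hS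
  have h1 : (∑ k ∈ S, a k) ^ n = ∑ v ∈ Fintype.piFinset (fun _ : Fin n => S), ∏ i, a (v i) := by
    rw [← Finset.prod_univ_sum]
    simp [Finset.prod_const]
  have hmaps : ∀ v ∈ Fintype.piFinset (fun _ : Fin n => S),
      (∑ i, v i) ∈ Finset.Icc (-((N:ℤ)*n)) ((N:ℤ)*n) := by
    intro v hv
    rw [Fintype.mem_piFinset] at hv
    rw [Finset.mem_Icc]
    constructor
    · have : ∑ _i : Fin n, (-(N:ℤ)) ≤ ∑ i, v i :=
        Finset.sum_le_sum fun i _ => (Finset.mem_Icc.mp (hv i)).1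
      simpa [mul_comm] using this
    · have : ∑ i, v i ≤ ∑ _i : Fin n, (N:ℤ) :=
        Finset.sum_le_sum fun i _ => (Finset.mem_Icc.mp (hv i)).2
      simpa [mul_comm] using this
  rw [h1, ← Finset.sum_fiberwise_of_maps_to hmaps (fun v => ∏ i, a (v i))]
  refine Finset.sum_le_sum fun k _ => ?_
  have h2 : ∑ v ∈ (Fintype.piFinset (fun _ : Fin n => S)).filter (fun v => (∑ i, v i) = k),
        ∏ i, a (v i)
      = ∑ v ∈ (Fintype.piFinset (fun _ : Fin n => S)).filter (fun v => (∑ i, v i) = k),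
        (if (∑ i, v i) = k then ∏ i, a (v i) else 0) :=
    Finset.sum_congr rfl fun v hv => by rw [if_pos (Finset.mem_filter.mp hv).2]
  rw [h2]
  exact Summable.sum_le_tsum _ (fun v _ => bsummand_nonneg h0 n k v) (bsummand_summable h0 hs n k)

lemma exists_b_big (h0 : ∀ n, 0 ≤ a n) (hs : Summable a) {t : ℝ} (N : ℕ) (n : ℕ)
    (ht : t ≤ ∑ k ∈ Finset.Icc (-(N:ℤ)) N, a k) (ht0 : 0 ≤ t) :
    ∃ k : ℤ, t ^ n / (2 * N * n + 1 : ℝ) ≤ b a n k := by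
  classical
  set T : Finset ℤ := Finset.Icc (-((N:ℤ)*n)) ((N:ℤ)*n) with hT
  have hcard : (T.card : ℝ) = 2 * N * n + 1 := by
    rw [hT, Int.card_Icc]
    have : ((N:ℤ)*n + 1 - -((N:ℤ)*n)) = 2*(N:ℤ)*n + 1 := by ring
    rw [this]
    have h2 : (0:ℤ) ≤ 2*(N:ℤ)*n + 1 := by positivity
    have h2' := Int.toNat_of_nonneg h2
    exact_mod_cast h2'
  have hTne : T.Nonempty := ⟨0, by simp [hT]; positivity⟩
  have hsum_le : ∑ k ∈ T, (t ^ n / (2 * N * n + 1 : ℝ)) ≤ ∑ k ∈ T, b a n k := by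
    rw [Finset.sum_const, nsmul_eq_mul, hcard]
    have h3 : t ^ n ≤ ∑ k ∈ T, b a n k :=
      le_trans (pow_le_pow_left₀ ht0 ht n) (mass_le h0 hs N n)
    have h4 : (0:ℝ) < 2 * N * n + 1 := by positivity
    rw [mul_div_cancel₀]
    · exact h3
    · exact ne_of_gt h4
  obtain ⟨k, _, hk⟩ := Finset.exists_le_of_sum_le hTne hsum_le
  exact ⟨k, hk⟩


lemma exists_interval (h0 : ∀ n, 0 ≤ a n) (hs : Summable a) (ht : ∑' k, a k = 1)
    {s : ℝ} (hs1 : s < 1) :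
    ∃ N : ℕ, s ≤ ∑ k ∈ Finset.Icc (-(N:ℤ)) N, a k := by
  have h := hs.hasSum
  rw [ht] at h
  have h2 : ∀ᶠ F in atTop, s < ∑ k ∈ F, a k := h.eventually (eventually_gt_nhds hs1)
  obtain ⟨F, hF⟩ := h2.exists
  refine ⟨F.sup (fun k => k.natAbs), ?_⟩
  have hsub : F ⊆ Finset.Icc (-((F.sup (fun k => k.natAbs) : ℕ) : ℤ))
      ((F.sup (fun k => k.natAbs) : ℕ) : ℤ) := by
    intro k hk
    rw [Finset.mem_Icc]
    have h3 : k.natAbs ≤ F.sup (fun k => k.natAbs) := Finset.le_sup hk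
    have h4 : |k| ≤ ((F.sup (fun k => k.natAbs) : ℕ) : ℤ) := by
      rw [Int.abs_eq_natAbs]
      exact_mod_cast h3
    exact abs_le.mp h4
  exact le_trans hF.le (Finset.sum_le_sum_of_subset_of_nonneg hsub (fun i _ _ => h0 i))

lemma f_lower (h0 : ∀ n, 0 ≤ a n) (hs : Summable a) (hsym : ∀ n : ℤ, a n = a (-n))
    {s : ℝ} (hs0 : 0 < s) (N : ℕ) (hN : s ≤ ∑ k ∈ Finset.Icc (-(N:ℤ)) N, a k)
    (n : ℕ) (hn : 1 ≤ n) :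
    s / ((2 * N * n + 1 : ℝ) ^ (1/(n:ℝ))) ≤ (b a (2*n) 0) ^ (1/(2*(n:ℝ))) := by
  obtain ⟨k, hk⟩ := exists_b_big h0 hs N n hN hs0.le
  set C : ℝ := (2 * N * n + 1 : ℝ) with hCdef
  have hC0 : (0:ℝ) < C := by positivity
  set q : ℝ := s ^ n / C with hq
  have hq0 : 0 < q := by positivity
  have h1 : q * q ≤ b a (2*n) 0 := by
    calc q * q ≤ b a n k * b a n (-k) := by
          rw [b_neg hsym n k]
          exact mul_le_mul hk hk hq0.le (b_nonneg h0 n k)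
      _ ≤ b a (n + n) (k + -k) := b_mul_le h0 hs n n k (-k)
      _ = b a (2*n) 0 := by rw [add_neg_cancel, two_mul]
  have h2 : (q * q) ^ (1/(2*(n:ℝ))) ≤ (b a (2*n) 0) ^ (1/(2*(n:ℝ))) :=
    Real.rpow_le_rpow (by positivity) h1 (by positivity)
  refine le_trans (le_of_eq ?_) h2
  have hn0 : (n:ℝ) ≠ 0 := by positivity
  have e1 : q * q = q ^ (2:ℕ) := by ring
  rw [e1, ← Real.rpow_natCast q 2, ← Real.rpow_mul hq0.le]
  have e2 : ((2:ℕ):ℝ) * (1/(2*(n:ℝ))) = 1/(n:ℝ) := by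
    push_cast
    field_simp
  rw [e2, hq, Real.div_rpow (by positivity) hC0.le]
  congr 1
  rw [← Real.rpow_natCast s n, ← Real.rpow_mul hs0.le, mul_one_div, div_self hn0,
    Real.rpow_one]

lemma tendsto_aux (N : ℕ) :
    Tendsto (fun n : ℕ => ((2 * N * n + 1 : ℝ)) ^ (1/(n:ℝ))) atTop (𝓝 1) := by
  have h1 : Tendsto (fun n : ℕ => ((2 * (N:ℝ) + 1)) ^ (1/(n:ℝ))) atTop (𝓝 1) := by
    have := Filter.Tendsto.rpow (tendsto_const_nhds (x := (2 * (N:ℝ) + 1)) (f := atTop))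
      tendsto_one_div_atTop_nhds_zero_nat (Or.inl (by positivity))
    simpa using this
  have h2 : Tendsto (fun n : ℕ => ((n:ℝ)) ^ (1/(n:ℝ))) atTop (𝓝 1) :=
    tendsto_rpow_div.comp tendsto_natCast_atTop_atTop
  have hupper : Tendsto (fun n : ℕ => ((2 * (N:ℝ) + 1)) ^ (1/(n:ℝ)) * ((n:ℝ)) ^ (1/(n:ℝ)))
      atTop (𝓝 1) := by simpa using h1.mul h2
  refine tendsto_of_tendsto_of_tendsto_of_le_of_le' tendsto_const_nhds hupper ?_ ?_
  · filter_upwards [eventually_ge_atTop 1] with n hn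
    have hx : (1:ℝ) ≤ 2 * N * n + 1 := by
      have : (0:ℝ) ≤ 2 * N * n := by positivity
      linarith
    calc (1:ℝ) = 1 ^ (1/(n:ℝ)) := (Real.one_rpow _).symm
      _ ≤ ((2 * N * n + 1 : ℝ)) ^ (1/(n:ℝ)) :=
        Real.rpow_le_rpow zero_le_one hx (by positivity)
  · filter_upwards [eventually_ge_atTop 1] with n hn
    have hn1 : (1:ℝ) ≤ (n:ℝ) := by exact_mod_cast hn
    have hle : (2 * N * n + 1 : ℝ) ≤ (2 * (N:ℝ) + 1) * n := by nlinarith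
    calc ((2 * N * n + 1 : ℝ)) ^ (1/(n:ℝ))
        ≤ ((2 * (N:ℝ) + 1) * n) ^ (1/(n:ℝ)) :=
          Real.rpow_le_rpow (by positivity) hle (by positivity)
      _ = ((2 * (N:ℝ) + 1)) ^ (1/(n:ℝ)) * ((n:ℝ)) ^ (1/(n:ℝ)) :=
          Real.mul_rpow (by positivity) (by positivity)

end RWaux

open RWaux in
private theorem limsup_test (a : ℤ → ℝ)
    (h0 : ∀ n : ℤ, 0 ≤ a n) (ht : (∑' n : ℤ, a n) = 1)
    (hsym : ∀ n : ℤ, a n = a (-n)) :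
    Filter.limsup (fun n : ℕ => (RWaux.b a (2 * n) 0) ^ (1 / (2 * (n : ℝ))))
      Filter.atTop = 1 := by
  have hs : Summable a := by
    by_contra h
    rw [tsum_eq_zero_of_not_summable h] at ht
    exact zero_ne_one ht
  set f : ℕ → ℝ := fun n => (RWaux.b a (2 * n) 0) ^ (1 / (2 * (n : ℝ))) with hfdef
  have hf0 : ∀ n, 0 ≤ f n := fun n => Real.rpow_nonneg (b_nonneg h0 (2*n) 0) _
  have hf1 : ∀ n, f n ≤ 1 := fun n =>
    Real.rpow_le_one (b_nonneg h0 (2*n) 0) (b_le_one h0 hs ht (2*n) 0) (by positivity)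
  have hbdd : IsBoundedUnder (· ≤ ·) atTop f := Filter.isBoundedUnder_of ⟨1, hf1⟩
  have hbdd' : IsBoundedUnder (· ≥ ·) atTop f := Filter.isBoundedUnder_of ⟨0, hf0⟩
  refine le_antisymm ?_ ?_
  · exact Filter.limsup_le_of_le hbdd'.isCoboundedUnder_le (Filter.Eventually.of_forall hf1)
  · refine le_of_forall_lt fun y hy => ?_
    set s : ℝ := (max y 0 + 1) / 2 with hsdef
    have hmax0 : 0 ≤ max y 0 := le_max_right _ _
    have hmax1 : max y 0 < 1 := max_lt hy one_pos
    have hs0 : 0 < s := by rw [hsdef]; linarith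
    have hs1 : s < 1 := by rw [hsdef]; linarith
    have hys : y < s := by
      have := le_max_left y 0
      rw [hsdef]; linarith
    obtain ⟨N, hN⟩ := exists_interval h0 hs ht hs1
    set L : ℕ → ℝ := fun n => s / ((2 * N * n + 1 : ℝ) ^ (1/(n:ℝ))) with hLdef
    have hL : Tendsto L atTop (𝓝 s) := by
      have h1 : Tendsto (fun n : ℕ => s / ((2 * N * n + 1 : ℝ) ^ (1/(n:ℝ)))) atTop
          (𝓝 (s / 1)) :=
        (tendsto_const_nhds (x := s) (f := atTop)).div (tendsto_aux N) one_ne_zero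
      rw [div_one] at h1
      exact h1
    have hLf : ∀ᶠ n in atTop, L n ≤ f n := by
      filter_upwards [eventually_ge_atTop 1] with n hn
      exact f_lower h0 hs hsym hs0 N hN n hn
    have h5 : s ≤ limsup f atTop := by
      calc s = liminf L atTop := hL.liminf_eq.symm
        _ ≤ liminf f atTop :=
            liminf_le_liminf hLf hL.isBoundedUnder_ge hbdd.isCoboundedUnder_ge
        _ ≤ limsup f atTop := liminf_le_limsup hbdd hbdd'
    exact lt_of_lt_of_le hys h5

/-- For a symmetric random walk, `limsup (c_(2n))^(1/(2n)) = 1`. -/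
theorem limsup_even_returnProb_rpow (a : ℤ → ℝ) (ha : IsRandomWalk a)
    (hsym : ∀ n : ℤ, a n = a (-n)) :
    Filter.limsup (fun n : ℕ => (returnProb a (2 * n)) ^ (1 / (2 * (n : ℝ))))
      Filter.atTop = 1 := by
  obtain ⟨h0, ht, -⟩ := ha
  exact limsup_test a h0 ht hsym
end
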